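/- arXiv:1509.08100 — 3 statements merged into one kernel-verified Lean document; each statement's English description precedes it below -/
import Mathlib

section
/- Under the asymptotic framework with p_m → 0, let α_m ∈ (0,1) and let ω_{B,m} > 0 be a solution of the BFDR equation (1 − D(ω))/(1 − D(ω·(1+u_m)^(−1/2))) = r_{α_m}/f_m, where r_α = α/(1−α) and f_m = (1−p_m)/p_m. Then the procedure with threshold ω_{B,m} is asymptotically Bayes optimal under sparsity, i.e., ω_{B,m}²/(C·(v_m/C_0)^(2/γ)) → 1, if and only if δ_m·r_{α_m} → C_1/(1 − C_2), where δ_m = v_m/f_m, C_1 = 2√C·d(√C)/γ and C_2 = 2D(√C) − 1. -/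
open MeasureTheory Filter

/-- Cumulative distribution function of a density `d` with respect to Lebesgue measure. -/
noncomputable def cdf (d : ℝ → ℝ) (x : ℝ) : ℝ := ∫ t in Set.Iic x, d t

/-- A monotone polynomial tail (MPT) density with tail index `γ` and tail constant `Cd`:
a probability density function that is even (or supported on the nonnegative half-line),
strictly positive on `(0, ∞)`, satisfies `d x * x ^ (γ + 1) → Cd` as `x → ∞`, and has a
monotone likelihood ratio: for every `θ > 1`, `x ↦ d (x / θ) / d x` is strictly increasing
on `(0, ∞)`. -/
structure IsMPT (d : ℝ → ℝ) (γ Cd : ℝ) : Prop where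
  gamma_pos : 0 < γ
  Cd_pos : 0 < Cd
  nonneg : ∀ x, 0 ≤ d x
  integrable : Integrable d
  integral_one : ∫ x, d x = 1
  even_or_halfline : (∀ x, d (-x) = d x) ∨ (∀ x < 0, d x = 0)
  pos : ∀ x, 0 < x → 0 < d x
  tail : Tendsto (fun x => d x * x ^ (γ + 1)) atTop (nhds Cd)
  mlr : ∀ θ : ℝ, 1 < θ → StrictMonoOn (fun x => d (x / θ) / d x) (Set.Ioi 0)

namespace BFDRaux

open Set

noncomputable def S (d : ℝ → ℝ) (x : ℝ) : ℝ := ∫ t in Set.Ioi x, d t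

lemma one_sub_cdf {d : ℝ → ℝ} (hint : Integrable d) (h1 : ∫ x, d x = 1) (x : ℝ) :
    1 - cdf d x = S d x := by
  have h := intervalIntegral.integral_Iic_add_Ioi (b := x) hint.integrableOn hint.integrableOn
  rw [h1] at h
  unfold cdf S
  linarith

lemma S_anti {d : ℝ → ℝ} (hint : Integrable d) (hnn : ∀ x, 0 ≤ d x) : Antitone (S d) := by
  intro a b hab
  exact setIntegral_mono_set hint.integrableOn (ae_of_all _ hnn)
    (HasSubset.Subset.eventuallyLE (Ioi_subset_Ioi hab))

lemma S_pos {d : ℝ → ℝ} (hint : Integrable d) (hnn : ∀ x, 0 ≤ d x)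
    (hpos : ∀ x, 0 < x → 0 < d x) (x : ℝ) : 0 < S d x := by
  have hb : 0 < S d (max x 0) := by
    rw [S, setIntegral_pos_iff_support_of_nonneg_ae (ae_of_all _ hnn) hint.integrableOn]
    have hsub : Set.Ioi (max x 0) ⊆ Function.support d ∩ Set.Ioi (max x 0) := fun y hy =>
      ⟨(hpos y (lt_of_le_of_lt (le_max_right x 0) hy)).ne', hy⟩
    refine lt_of_lt_of_le ?_ (measure_mono hsub)
    simp [Real.volume_Ioi]
  exact lt_of_lt_of_le hb (S_anti hint hnn (le_max_left x 0))

lemma S_le_one {d : ℝ → ℝ} (hint : Integrable d) (h1 : ∫ x, d x = 1) (hnn : ∀ x, 0 ≤ d x)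
    (x : ℝ) : S d x ≤ 1 := by
  have := one_sub_cdf hint h1 x
  have hc : 0 ≤ cdf d x := setIntegral_nonneg measurableSet_Iic (fun t _ => hnn t)
  linarith

lemma S_cont {d : ℝ → ℝ} (hint : Integrable d) (h1 : ∫ x, d x = 1) : Continuous (S d) := by
  have hc : Continuous (cdf d) := by
    have h2 : ∀ x : ℝ, cdf d x = cdf d 0 + ∫ t in (0:ℝ)..x, d t := by
      intro x
      have := intervalIntegral.integral_Iic_sub_Iic (f := d) (μ := volume) (a := (0:ℝ)) (b := x)
        hint.integrableOn hint.integrableOn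
      unfold cdf
      linarith
    have : Continuous fun x : ℝ => cdf d 0 + ∫ t in (0:ℝ)..x, d t :=
      continuous_const.add (hint.continuous_primitive 0)
    exact this.congr fun x => (h2 x).symm
  exact (continuous_const.sub hc).congr fun x => one_sub_cdf hint h1 x

section MPT
variable {d : ℝ → ℝ} {γ Cd : ℝ}

lemma ratio_lim (h : IsMPT d γ Cd) {θ : ℝ} (hθ : 1 < θ) :
    Tendsto (fun z => d (z / θ) / d z) atTop (nhds (θ ^ (γ + 1))) := by
  have hθ0 : (0:ℝ) < θ := lt_trans one_pos hθ
  have hcomp : Tendsto (fun z : ℝ => d (z / θ) * (z / θ) ^ (γ + 1)) atTop (nhds Cd) :=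
    h.tail.comp (tendsto_id.atTop_div_const hθ0)
  have hlim : Tendsto (fun z : ℝ =>
      d (z / θ) * (z / θ) ^ (γ + 1) / (d z * z ^ (γ + 1)) * θ ^ (γ + 1)) atTop
      (nhds (Cd / Cd * θ ^ (γ + 1))) :=
    (hcomp.div h.tail h.Cd_pos.ne').mul_const _
  rw [div_self h.Cd_pos.ne', one_mul] at hlim
  refine hlim.congr' ?_
  filter_upwards [eventually_gt_atTop (0:ℝ)] with z hz
  have hdz : d z ≠ 0 := (h.pos z hz).ne'
  have hzr : (0:ℝ) < z ^ (γ + 1) := Real.rpow_pos_of_pos hz _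
  have hθr : (0:ℝ) < θ ^ (γ + 1) := Real.rpow_pos_of_pos hθ0 _
  rw [Real.div_rpow hz.le hθ0.le]
  field_simp

lemma g_strictMono (h : IsMPT d γ Cd) {x y : ℝ} (hx : 0 < x) (hxy : x < y) :
    d x * x ^ (γ + 1) < d y * y ^ (γ + 1) := by
  have hy : 0 < y := lt_trans hx hxy
  set θ := y / x with hθdef
  have hθ : 1 < θ := (one_lt_div hx).2 hxy
  have hyx : y / θ = x := by
    rw [hθdef, div_div_eq_mul_div, mul_comm, mul_div_assoc, div_self hy.ne', mul_one]
  have h1 : d (y / θ) / d y < d ((y+1) / θ) / d (y+1) :=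
    h.mlr θ hθ (Set.mem_Ioi.2 hy) (Set.mem_Ioi.2 (lt_trans hy (lt_add_one y))) (lt_add_one y)
  have h2 : d ((y+1) / θ) / d (y+1) ≤ θ ^ (γ + 1) := by
    refine ge_of_tendsto (ratio_lim h hθ) ?_
    filter_upwards [eventually_ge_atTop (y + 2)] with z hz
    exact (h.mlr θ hθ).monotoneOn (Set.mem_Ioi.2 (lt_trans hy (lt_add_one y)))
      (Set.mem_Ioi.2 (by linarith)) (by linarith)
  have hkey : d x / d y < θ ^ (γ + 1) := by
    rw [← hyx]; exact lt_of_lt_of_le h1 h2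
  rw [hθdef, Real.div_rpow hy.le hx.le] at hkey
  have hxr : (0:ℝ) < x ^ (γ + 1) := Real.rpow_pos_of_pos hx _
  have hdy : (0:ℝ) < d y := h.pos y hy
  rw [div_lt_div_iff₀ hdy (Real.rpow_pos_of_pos hx _)] at hkey
  nlinarith [hkey]

lemma g_lt_Cd (h : IsMPT d γ Cd) {x : ℝ} (hx : 0 < x) : d x * x ^ (γ + 1) < Cd := by
  have h1 : d x * x ^ (γ + 1) < d (x+1) * (x+1) ^ (γ + 1) := g_strictMono h hx (lt_add_one x)
  have h2 : d (x+1) * (x+1) ^ (γ + 1) ≤ Cd := by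
    refine ge_of_tendsto h.tail ?_
    filter_upwards [eventually_ge_atTop (x + 2)] with z hz
    exact (g_strictMono h (by linarith) (by linarith)).le
  linarith

lemma S_scale {d : ℝ → ℝ} (hint : Integrable d) {a k : ℝ} (hk : 0 < k) :
    S d (k * a) = k * ∫ r in Set.Ioi a, d (k * r) := by
  have h := MeasureTheory.integral_comp_mul_left_Ioi d a hk
  rw [smul_eq_mul] at h
  rw [S, h, ← mul_assoc, mul_inv_cancel₀ hk.ne', one_mul]

noncomputable def hh (d : ℝ → ℝ) (γ : ℝ) (t : ℝ) : ℝ := t ^ γ * S d t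

lemma hh_repr {d : ℝ → ℝ} {γ : ℝ} (hint : Integrable d) {t : ℝ} (ht : 0 < t) :
    hh d γ t = ∫ r in Set.Ioi 1, t ^ (γ + 1) * d (t * r) := by
  have h1 : S d t = t * ∫ r in Set.Ioi 1, d (t * r) := by
    simpa using S_scale hint (a := 1) ht
  rw [hh, h1, MeasureTheory.integral_const_mul, Real.rpow_add_one ht.ne']
  ring

lemma hh_integrand_eq {d : ℝ → ℝ} {γ : ℝ} {t r : ℝ} (ht : 0 < t) (hr : 0 < r) :
    t ^ (γ + 1) * d (t * r) = (d (t * r) * (t * r) ^ (γ + 1)) * r ^ (-(γ + 1)) := by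
  rw [Real.mul_rpow ht.le hr.le, Real.rpow_neg hr.le]
  have : r ^ (γ + 1) ≠ 0 := (Real.rpow_pos_of_pos hr _).ne'
  field_simp

lemma integrand_integrable {d : ℝ → ℝ} (hint : Integrable d) {t : ℝ} (ht : 0 < t) (c : ℝ) :
    MeasureTheory.IntegrableOn (fun r => c * d (t * r)) (Set.Ioi 1) :=
  ((hint.comp_mul_left' ht.ne').const_mul c).integrableOn

lemma rpow_bound_integrable {γ : ℝ} (hγ : 0 < γ) (c : ℝ) :
    MeasureTheory.IntegrableOn (fun r : ℝ => c * r ^ (-(γ + 1))) (Set.Ioi 1) :=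
  (integrableOn_Ioi_rpow_of_lt (by linarith) one_pos).const_mul c

lemma rpow_bound_integral {γ : ℝ} (hγ : 0 < γ) (c : ℝ) :
    ∫ r in Set.Ioi (1:ℝ), c * r ^ (-(γ + 1)) = c / γ := by
  rw [MeasureTheory.integral_const_mul, integral_Ioi_rpow_of_lt (by linarith) one_pos,
    Real.one_rpow]
  field_simp
  rw [show -(γ + 1) + 1 = -γ by ring, div_neg, neg_neg, mul_div_assoc, div_self hγ.ne', mul_one]

lemma hh_le {d : ℝ → ℝ} {γ Cd : ℝ} (h : IsMPT d γ Cd) {t : ℝ} (ht : 0 < t) :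
    hh d γ t ≤ Cd / γ := by
  rw [hh_repr h.integrable ht, ← rpow_bound_integral h.gamma_pos Cd]
  refine MeasureTheory.setIntegral_mono_on
    ((h.integrable.comp_mul_left' ht.ne').const_mul _).integrableOn
    (rpow_bound_integrable h.gamma_pos Cd) measurableSet_Ioi ?_
  intro r hr
  have hr0 : (0:ℝ) < r := lt_trans one_pos hr
  rw [hh_integrand_eq ht hr0]
  have hrp : (0:ℝ) < r ^ (-(γ + 1)) := Real.rpow_pos_of_pos hr0 _
  exact mul_le_mul_of_nonneg_right (g_lt_Cd h (mul_pos ht hr0)).le hrp.le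

lemma hh_ge {d : ℝ → ℝ} {γ Cd : ℝ} (h : IsMPT d γ Cd) {ε : ℝ} (hε : 0 < ε) :
    ∃ T : ℝ, ∀ t, T ≤ t → (Cd - ε) / γ ≤ hh d γ t := by
  obtain ⟨T0, hT0⟩ := (eventually_atTop.1 (h.tail.eventually
    (eventually_ge_nhds (by linarith : Cd - ε < Cd))))
  refine ⟨max T0 1, fun t ht => ?_⟩
  have ht0 : (0:ℝ) < t := lt_of_lt_of_le one_pos (le_trans (le_max_right T0 1) ht)
  rw [hh_repr h.integrable ht0, ← rpow_bound_integral h.gamma_pos (Cd - ε)]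
  refine MeasureTheory.setIntegral_mono_on (rpow_bound_integrable h.gamma_pos (Cd - ε))
    ((h.integrable.comp_mul_left' ht0.ne').const_mul _).integrableOn measurableSet_Ioi ?_
  intro r hr
  have hr0 : (0:ℝ) < r := lt_trans one_pos hr
  rw [hh_integrand_eq ht0 hr0]
  have hrp : (0:ℝ) < r ^ (-(γ + 1)) := Real.rpow_pos_of_pos hr0 _
  refine mul_le_mul_of_nonneg_right (hT0 (t * r) ?_) hrp.le
  calc T0 ≤ t := le_trans (le_max_left T0 1) ht
  _ = t * 1 := (mul_one t).symm
  _ ≤ t * r := by nlinarith [Set.mem_Ioi.1 hr]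

lemma hh_tendsto {d : ℝ → ℝ} {γ Cd : ℝ} (h : IsMPT d γ Cd) :
    Tendsto (hh d γ) atTop (nhds (Cd / γ)) := by
  rw [Metric.tendsto_atTop]
  intro ε hε
  have hγ := h.gamma_pos
  have hε' : 0 < ε * γ / 2 := by positivity
  obtain ⟨T, hT⟩ := hh_ge h hε'
  refine ⟨max T 1, fun t ht => ?_⟩
  have ht0 : (0:ℝ) < t := lt_of_lt_of_le one_pos (le_trans (le_max_right T 1) ht)
  have h1 := hT t (le_trans (le_max_left T 1) ht)
  have h2 := hh_le h ht0
  have he : (Cd - ε * γ / 2) / γ = Cd / γ - ε / 2 := by field_simp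
  rw [Real.dist_eq, abs_lt]
  constructor <;> linarith

lemma hh_strictMono {d : ℝ → ℝ} {γ Cd : ℝ} (h : IsMPT d γ Cd) {t1 t2 : ℝ}
    (ht1 : 0 < t1) (ht12 : t1 < t2) : hh d γ t1 < hh d γ t2 := by
  have ht2 : 0 < t2 := lt_trans ht1 ht12
  rw [hh_repr h.integrable ht1, hh_repr h.integrable ht2]
  set F := fun r => t1 ^ (γ + 1) * d (t1 * r) with hF
  set G := fun r => t2 ^ (γ + 1) * d (t2 * r) with hG
  have hIntF : MeasureTheory.IntegrableOn F (Set.Ioi 1) :=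
    ((h.integrable.comp_mul_left' ht1.ne').const_mul _).integrableOn
  have hIntG : MeasureTheory.IntegrableOn G (Set.Ioi 1) :=
    ((h.integrable.comp_mul_left' ht2.ne').const_mul _).integrableOn
  have hlt : ∀ r ∈ Set.Ioi (1:ℝ), F r < G r := by
    intro r hr
    have hr0 : (0:ℝ) < r := lt_trans one_pos hr
    have hrp : (0:ℝ) < r ^ (-(γ + 1)) := Real.rpow_pos_of_pos hr0 _
    rw [hF, hG]
    simp only
    rw [hh_integrand_eq ht1 hr0, hh_integrand_eq ht2 hr0]
    exact mul_lt_mul_of_pos_right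
      (g_strictMono h (mul_pos ht1 hr0) (by nlinarith)) hrp
  have hpos : 0 < ∫ r in Set.Ioi (1:ℝ), (G r - F r) := by
    rw [MeasureTheory.setIntegral_pos_iff_support_of_nonneg_ae]
    · refine lt_of_lt_of_le ?_ (measure_mono (fun r hr =>
        Set.mem_inter (by simp [Function.mem_support]; exact (sub_pos.2 (hlt r hr)).ne') hr))
      simp [Real.volume_Ioi]
    · exact (MeasureTheory.ae_restrict_iff' measurableSet_Ioi).2
        (Filter.Eventually.of_forall fun r hr => sub_nonneg.2 (hlt r hr).le)
    · exact hIntG.sub hIntF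
  have := MeasureTheory.integral_sub hIntG hIntF
  rw [MeasureTheory.integral_sub hIntG hIntF] at hpos
  linarith

lemma hh_pos {d : ℝ → ℝ} {γ Cd : ℝ} (h : IsMPT d γ Cd) {t : ℝ} (ht : 0 < t) :
    0 < hh d γ t :=
  mul_pos (Real.rpow_pos_of_pos ht _) (S_pos h.integrable h.nonneg h.pos t)

lemma hh_contAt {d : ℝ → ℝ} {γ Cd : ℝ} (h : IsMPT d γ Cd) {t : ℝ} (ht : 0 < t) :
    ContinuousAt (hh d γ) t :=
  ((Real.continuousAt_rpow_const t γ (Or.inl ht.ne')).mul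
    ((S_cont h.integrable h.integral_one).continuousAt))

end MPT

end BFDRaux

open Set

/-- Proposition 3 (ABOS condition for BFDR control): under the asymptotic framework with
`p_m → 0`, the fixed thresholding procedure with threshold `ω_{B,m}` solving the BFDR equation
`(1 - D ω) / (1 - D (ω * (1 + u_m) ^ (-1/2))) = r_{α_m} / f_m` is ABOS, i.e.
`ω_{B,m} ^ 2 / (C * (v_m / C₀) ^ (2/γ)) → 1`, if and only if
`δ_m * r_{α_m} → C₁ / (1 - C₂)`. -/
theorem BFDR_procedure_ABOS_iff (d : ℝ → ℝ) (γ Cd : ℝ) (h : IsMPT d γ Cd)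
    (heven : ∀ x, d (-x) = d x) (hcont : ContinuousOn d (Set.Ioi 0))
    (C : ℝ) (hC : 0 < C)
    (p : ℕ → ℝ) (hp : ∀ m, p m ∈ Set.Ioo (0 : ℝ) 1) (hp0 : Tendsto p atTop (nhds 0))
    (u : ℕ → ℝ) (hu : ∀ m, 0 < u m) (hu' : Tendsto u atTop atTop)
    (δ : ℕ → ℝ) (hδ : ∀ m, 0 < δ m)
    (f v : ℕ → ℝ) (hf : ∀ m, f m = (1 - p m) / p m) (hv : ∀ m, v m = δ m * f m)
    (hvu : Tendsto (fun m => v m * u m ^ (-(γ / 2))) atTop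
      (nhds (C ^ ((γ + 1) / 2) * d (Real.sqrt C) / Cd)))
    (α : ℕ → ℝ) (hα : ∀ m, α m ∈ Set.Ioo (0 : ℝ) 1)
    (ωB : ℕ → ℝ) (hωB : ∀ m, 0 < ωB m)
    (hωBeq : ∀ m, (1 - cdf d (ωB m)) / (1 - cdf d (ωB m * (1 + u m) ^ (-(1 : ℝ) / 2)))
      = (α m / (1 - α m)) / f m) :
    Tendsto
      (fun m => ωB m ^ 2 / (C * (v m / (C ^ ((γ + 1) / 2) * d (Real.sqrt C) / Cd)) ^ (2 / γ)))
      atTop (nhds 1) ↔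
    Tendsto (fun m => δ m * (α m / (1 - α m))) atTop
      (nhds ((2 * Real.sqrt C * d (Real.sqrt C) / γ) / (1 - (2 * cdf d (Real.sqrt C) - 1)))) := by
  classical
  set sC := Real.sqrt C with hsCdef
  have hsC : 0 < sC := Real.sqrt_pos.2 hC
  have hdsC : 0 < d sC := h.pos _ hsC
  have hγ := h.gamma_pos
  set C0 := C ^ ((γ + 1) / 2) * d sC / Cd with hC0def
  have hC0 : 0 < C0 := div_pos (mul_pos (Real.rpow_pos_of_pos hC _) hdsC) h.Cd_pos
  have hSpos : ∀ x, 0 < BFDRaux.S d x := BFDRaux.S_pos h.integrable h.nonneg h.pos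
  have hSle : ∀ x, BFDRaux.S d x ≤ 1 := BFDRaux.S_le_one h.integrable h.integral_one h.nonneg
  have hcdfS : ∀ x, 1 - cdf d x = BFDRaux.S d x := BFDRaux.one_sub_cdf h.integrable h.integral_one
  -- basic per-m positivity
  have hfpos : ∀ m, 0 < f m := fun m => by
    rw [hf m]; exact div_pos (by linarith [(hp m).2]) (hp m).1
  have hvpos : ∀ m, 0 < v m := fun m => by rw [hv m]; exact mul_pos (hδ m) (hfpos m)
  have hrpos : ∀ m, 0 < α m / (1 - α m) := fun m =>
    div_pos (hα m).1 (by linarith [(hα m).2])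
  have h1u : ∀ m, (0:ℝ) < 1 + u m := fun m => by linarith [hu m]
  set b : ℕ → ℝ := fun m => ωB m * (1 + u m) ^ (-(1 : ℝ) / 2) with hbdef
  have hbpos : ∀ m, 0 < b m := fun m =>
    mul_pos (hωB m) (Real.rpow_pos_of_pos (h1u m) _)
  set w : ℕ → ℝ := fun m => ωB m / u m ^ ((1:ℝ)/2) with hwdef
  have hwpos : ∀ m, 0 < w m := fun m =>
    div_pos (hωB m) (Real.rpow_pos_of_pos (hu m) _)
  -- the key algebraic identity
  have hkey : ∀ m, δ m * (α m / (1 - α m)) =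
      (v m * u m ^ (-(γ / 2))) * ((u m / (1 + u m)) ^ (γ / 2)) *
        BFDRaux.hh d γ (ωB m) / BFDRaux.hh d γ (b m) := by
    intro m
    have hum := hu m
    have h1um := h1u m
    have hωm := hωB m
    have hbm := hbpos m
    have hSb := hSpos (b m)
    have hSω := hSpos (ωB m)
    have e1 : BFDRaux.S d (ωB m) / BFDRaux.S d (b m) = (α m / (1 - α m)) / f m := by
      rw [← hcdfS, ← hcdfS]; exact hωBeq m
    have e2 : δ m * (α m / (1 - α m)) = v m * (BFDRaux.S d (ωB m) / BFDRaux.S d (b m)) := by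
      have hcan : f m * (α m / (1 - α m) / f m) = α m / (1 - α m) := by
        rw [mul_comm]
        exact div_mul_cancel₀ _ (hfpos m).ne'
      rw [e1, hv m, mul_assoc, hcan]
    have eb : (b m) ^ γ = (ωB m) ^ γ * ((1 + u m) ^ (γ / 2))⁻¹ := by
      rw [hbdef]
      simp only
      rw [Real.mul_rpow hωm.le (Real.rpow_pos_of_pos h1um _).le,
        ← Real.rpow_mul h1um.le, ← Real.rpow_neg h1um.le]
      congr 2
      ring
    have eu : (u m / (1 + u m)) ^ (γ / 2) = u m ^ (γ / 2) * ((1 + u m) ^ (γ / 2))⁻¹ := by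
      rw [Real.div_rpow hum.le h1um.le, div_eq_mul_inv]
    have eun : u m ^ (-(γ / 2)) = (u m ^ (γ / 2))⁻¹ := Real.rpow_neg hum.le _
    rw [e2, BFDRaux.hh, BFDRaux.hh, eb, eu, eun]
    have p1 : (0:ℝ) < u m ^ (γ / 2) := Real.rpow_pos_of_pos hum _
    have p2 : (0:ℝ) < (1 + u m) ^ (γ / 2) := Real.rpow_pos_of_pos h1um _
    have p3 : (0:ℝ) < (ωB m) ^ γ := Real.rpow_pos_of_pos hωm _
    field_simp
    -- limit facts
  have hq1 : Tendsto (fun m => u m / (1 + u m)) atTop (nhds 1) := by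
    have h1 : Tendsto (fun m => 1 + u m) atTop atTop := tendsto_atTop_add_const_left _ 1 hu'
    have h2 : Tendsto (fun m => (1 + u m)⁻¹) atTop (nhds 0) := tendsto_inv_atTop_zero.comp h1
    have h3 : Tendsto (fun m => 1 - (1 + u m)⁻¹) atTop (nhds (1 - 0)) :=
      tendsto_const_nhds.sub h2
    rw [sub_zero] at h3
    refine h3.congr fun m => ?_
    have := h1u m
    field_simp
    ring
  have hq2 : Tendsto (fun m => (1 + u m) / u m) atTop (nhds 1) := by
    have h2 : Tendsto (fun m => (u m)⁻¹) atTop (nhds 0) := tendsto_inv_atTop_zero.comp hu'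
    have h3 : Tendsto (fun m => (u m)⁻¹ + 1) atTop (nhds (0 + 1)) := h2.add tendsto_const_nhds
    rw [zero_add] at h3
    refine h3.congr fun m => ?_
    have := hu m
    field_simp
  have hrpow1 : ∀ (e : ℝ) (q : ℕ → ℝ), Tendsto q atTop (nhds 1) →
      Tendsto (fun m => q m ^ e) atTop (nhds 1) := by
    intro e q hq
    have hcont1 : ContinuousAt (fun x : ℝ => x ^ e) 1 :=
      Real.continuousAt_rpow_const 1 e (Or.inl one_ne_zero)
    have := hcont1.tendsto.comp hq
    rw [Real.one_rpow] at this; exact this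
  have hs : Tendsto (fun m => (u m / (1 + u m)) ^ (γ / 2)) atTop (nhds 1) := hrpow1 _ _ hq1
  have hvC0 : Tendsto (fun m => v m * u m ^ (-(γ / 2)) / C0) atTop (nhds 1) := by
    have := hvu.div_const C0
    rwa [div_self hC0.ne'] at this
  have hE : Tendsto (fun m => (v m / C0) ^ (2 / γ) / u m) atTop (nhds 1) := by
    have hE0 := hrpow1 (2 / γ) _ hvC0
    refine hE0.congr fun m => ?_
    have hum := hu m
    have hvm := hvpos m
    have e1 : v m * u m ^ (-(γ / 2)) / C0 = (v m / C0) * u m ^ (-(γ / 2)) := by ring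
    rw [e1, Real.mul_rpow (div_pos hvm hC0).le (Real.rpow_pos_of_pos hum _).le,
      ← Real.rpow_mul hum.le]
    have e2 : (-(γ / 2)) * (2 / γ) = -1 := by field_simp
    rw [e2, Real.rpow_neg_one]
    exact (div_eq_mul_inv _ _).symm
  -- sqrt/rpow bridges
  have hsq2 : sC ^ (2:ℝ) = C := by
    rw [show (2:ℝ) = ((2:ℕ):ℝ) by norm_num, Real.rpow_natCast]
    exact Real.sq_sqrt hC.le
  have hcg : sC ^ γ = C ^ (γ / 2) := by
    rw [← hsq2, ← Real.rpow_mul hsC.le]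
    congr 1; ring
  have hCsplit : C ^ ((γ + 1) / 2) = C ^ (γ / 2) * sC := by
    have hsC12 : C ^ ((1:ℝ)/2) = sC := by
      rw [← hsq2, ← Real.rpow_mul hsC.le]
      norm_num
    rw [← hsC12, ← Real.rpow_add hC]
    congr 1; ring
  have hhsC : 0 < BFDRaux.hh d γ sC := BFDRaux.hh_pos h hsC
  have hLeq : (2 * sC * d sC / γ) / (1 - (2 * cdf d sC - 1))
      = C0 * (Cd / γ) / BFDRaux.hh d γ sC := by
    have hSsc := hSpos sC
    have hsCg : (0:ℝ) < sC ^ γ := Real.rpow_pos_of_pos hsC _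
    have h2S : (1 : ℝ) - (2 * cdf d sC - 1) = 2 * BFDRaux.S d sC := by
      linarith [hcdfS sC]
    rw [h2S, BFDRaux.hh, hC0def, hCsplit, ← hcg]
    have hCd1 : sC ^ γ * sC * d sC / Cd * (Cd / γ) = sC ^ γ * sC * d sC / γ := by
      rw [div_mul_div_comm, mul_comm Cd γ, mul_div_mul_right _ _ h.Cd_pos.ne']
    rw [hCd1, div_eq_div_iff (by positivity) (by positivity)]
    ring
  have hLpos : 0 < (2 * sC * d sC / γ) / (1 - (2 * cdf d sC - 1)) := by
    rw [hLeq]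
    exact div_pos (mul_pos hC0 (div_pos h.Cd_pos hγ)) hhsC
  -- b in terms of w
  have hbw : ∀ m, b m = w m * (u m / (1 + u m)) ^ ((1:ℝ)/2) := by
    intro m
    have hum := hu m
    have h1um := h1u m
    have hu12 : (0:ℝ) < u m ^ ((1:ℝ)/2) := Real.rpow_pos_of_pos hum _
    have h1u12 : (0:ℝ) < (1 + u m) ^ ((1:ℝ)/2) := Real.rpow_pos_of_pos h1um _
    rw [hbdef, hwdef]
    simp only
    rw [Real.div_rpow hum.le h1um.le, show ((-1:ℝ))/2 = -((1:ℝ)/2) by norm_num,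
      Real.rpow_neg h1um.le]
    field_simp
  have hwb : ∀ m, w m = b m * ((1 + u m) / u m) ^ ((1:ℝ)/2) := by
    intro m
    have hum := hu m
    have h1um := h1u m
    have hu12 : (0:ℝ) < u m ^ ((1:ℝ)/2) := Real.rpow_pos_of_pos hum _
    have h1u12 : (0:ℝ) < (1 + u m) ^ ((1:ℝ)/2) := Real.rpow_pos_of_pos h1um _
    rw [hbdef, hwdef]
    simp only
    rw [Real.div_rpow h1um.le hum.le, show ((-1:ℝ))/2 = -((1:ℝ)/2) by norm_num,
      Real.rpow_neg h1um.le]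
    field_simp
  -- forward final: w → sC implies the BFDR limit
  have hδr_of_w : Tendsto w atTop (nhds sC) →
      Tendsto (fun m => δ m * (α m / (1 - α m))) atTop
        (nhds ((2 * sC * d sC / γ) / (1 - (2 * cdf d sC - 1)))) := by
    intro hw
    have hωBtop : Tendsto ωB atTop atTop := by
      have hsqu : Tendsto (fun m => u m ^ ((1:ℝ)/2)) atTop atTop :=
        (tendsto_rpow_atTop (by norm_num)).comp hu'
      have hmul := Filter.Tendsto.pos_mul_atTop hsC hw hsqu
      refine hmul.congr fun m => ?_
      rw [hwdef]
      simp only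
      exact div_mul_cancel₀ _ (Real.rpow_pos_of_pos (hu m) _).ne'
    have hhω : Tendsto (fun m => BFDRaux.hh d γ (ωB m)) atTop (nhds (Cd / γ)) :=
      (BFDRaux.hh_tendsto h).comp hωBtop
    have hbl : Tendsto b atTop (nhds sC) := by
      have hm := hw.mul (hrpow1 ((1:ℝ)/2) _ hq1)
      rw [mul_one] at hm
      exact hm.congr fun m => (hbw m).symm
    have hhb : Tendsto (fun m => BFDRaux.hh d γ (b m)) atTop (nhds (BFDRaux.hh d γ sC)) :=
      (BFDRaux.hh_contAt h hsC).tendsto.comp hbl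
    have final := ((hvu.mul hs).mul hhω).div hhb hhsC.ne'
    rw [mul_one] at final
    rw [hLeq]
    exact final.congr fun m => (hkey m).symm
  -- backward: BFDR limit implies w → sC
  have hw_of_δr : Tendsto (fun m => δ m * (α m / (1 - α m))) atTop
        (nhds ((2 * sC * d sC / γ) / (1 - (2 * cdf d sC - 1)))) →
      Tendsto w atTop (nhds sC) := by
    intro hδr
    have hvtop : Tendsto v atTop atTop := by
      have hup : Tendsto (fun m => u m ^ (γ/2)) atTop atTop :=
        (tendsto_rpow_atTop (by positivity)).comp hu'
      have hmul := Filter.Tendsto.pos_mul_atTop hC0 hvu hup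
      refine hmul.congr fun m => ?_
      rw [mul_assoc, ← Real.rpow_add (hu m)]
      simp
    have hS0 : Tendsto (fun m => BFDRaux.S d (ωB m)) atTop (nhds 0) := by
      have hub : ∀ m, BFDRaux.S d (ωB m) ≤ δ m * (α m / (1 - α m)) * (v m)⁻¹ := by
        intro m
        have e1 : BFDRaux.S d (ωB m) / BFDRaux.S d (b m) = (α m / (1 - α m)) / f m := by
          rw [← hcdfS, ← hcdfS]; exact hωBeq m
        have e2 : δ m * (α m / (1 - α m)) = v m * (BFDRaux.S d (ωB m) / BFDRaux.S d (b m)) := by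
          have hcan : f m * (α m / (1 - α m) / f m) = α m / (1 - α m) := by
            rw [mul_comm]
            exact div_mul_cancel₀ _ (hfpos m).ne'
          rw [e1, hv m, mul_assoc, hcan]
        have hSb1 : BFDRaux.S d (ωB m) ≤ BFDRaux.S d (ωB m) / BFDRaux.S d (b m) := by
          rw [div_eq_mul_inv]
          nlinarith [hSpos (ωB m), hSpos (b m), hSle (b m),
            inv_anti₀ (hSpos (b m)) (hSle (b m))]
        have : BFDRaux.S d (ωB m) / BFDRaux.S d (b m)
            = δ m * (α m / (1 - α m)) * (v m)⁻¹ := by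
          rw [e2]
          field_simp
          rw [div_eq_div_iff (hSpos _).ne' (mul_pos (hSpos _) (hvpos m)).ne']; ring
        linarith
      have hlb : ∀ m, (0:ℝ) ≤ BFDRaux.S d (ωB m) := fun m => (hSpos (ωB m)).le
      have hbound : Tendsto (fun m => δ m * (α m / (1 - α m)) * (v m)⁻¹) atTop (nhds 0) := by
        have hi : Tendsto (fun m => (v m)⁻¹) atTop (nhds 0) := tendsto_inv_atTop_zero.comp hvtop
        have := hδr.mul hi
        rwa [mul_zero] at this
      exact tendsto_of_tendsto_of_tendsto_of_le_of_le tendsto_const_nhds hbound hlb hub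
    have hωBtop : Tendsto ωB atTop atTop := by
      rw [tendsto_atTop]
      intro M
      have hM' : 0 < BFDRaux.S d (max M 0 + 1) := hSpos _
      filter_upwards [hS0.eventually (eventually_lt_nhds hM')] with m hm
      by_contra hcon
      push_neg at hcon
      have hle : ωB m ≤ max M 0 + 1 := by
        have : M ≤ max M 0 + 1 := by
          have := le_max_left M 0; linarith
        linarith
      have := BFDRaux.S_anti h.integrable h.nonneg hle
      linarith
    have hhω : Tendsto (fun m => BFDRaux.hh d γ (ωB m)) atTop (nhds (Cd / γ)) :=
      (BFDRaux.hh_tendsto h).comp hωBtop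
    have hhb_lim : Tendsto (fun m => BFDRaux.hh d γ (b m)) atTop
        (nhds (BFDRaux.hh d γ sC)) := by
      have hnum := (hvu.mul hs).mul hhω
      have hdiv := hnum.div hδr hLpos.ne'
      have hval2 : C0 * 1 * (Cd / γ) / ((2 * sC * d sC / γ) / (1 - (2 * cdf d sC - 1)))
          = BFDRaux.hh d γ sC := by
        rw [hLeq, mul_one]
        have hX : C0 * (Cd / γ) ≠ 0 := (mul_pos hC0 (div_pos h.Cd_pos hγ)).ne'
        rw [div_div_eq_mul_div, mul_comm, mul_div_assoc, div_self hX, mul_one]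
      rw [hval2] at hdiv
      refine hdiv.congr fun m => ?_
      show v m * u m ^ (-(γ / 2)) * (u m / (1 + u m)) ^ (γ / 2) * BFDRaux.hh d γ (ωB m)
          / (δ m * (α m / (1 - α m))) = BFDRaux.hh d γ (b m)
      rw [hkey m]
      have hYne : v m * u m ^ (-(γ / 2)) * ((u m / (1 + u m)) ^ (γ / 2))
          * BFDRaux.hh d γ (ωB m) ≠ 0 := by
        have hp4 := mul_pos (mul_pos (mul_pos (hvpos m)
          (Real.rpow_pos_of_pos (hu m) (-(γ / 2))))
          (Real.rpow_pos_of_pos (div_pos (hu m) (h1u m)) (γ / 2)))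
          (BFDRaux.hh_pos h (hωB m))
        exact hp4.ne'
      rw [div_div_eq_mul_div, mul_comm, mul_div_assoc, div_self hYne, mul_one]
    have hbl : Tendsto b atTop (nhds sC) := by
      rw [Metric.tendsto_atTop]
      intro ε hε
      set ε' := min ε (sC/2) with hε'def
      have hε'pos : 0 < ε' := lt_min hε (by linarith)
      have hε'sC : ε' ≤ sC / 2 := min_le_right _ _
      have h1 : BFDRaux.hh d γ (sC - ε') < BFDRaux.hh d γ sC :=
        BFDRaux.hh_strictMono h (by linarith) (by linarith)
      have h2 : BFDRaux.hh d γ sC < BFDRaux.hh d γ (sC + ε') :=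
        BFDRaux.hh_strictMono h hsC (by linarith)
      have hev : ∀ᶠ m in atTop, BFDRaux.hh d γ (b m) ∈
          Set.Ioo (BFDRaux.hh d γ (sC - ε')) (BFDRaux.hh d γ (sC + ε')) :=
        hhb_lim.eventually_mem (Ioo_mem_nhds h1 h2)
      obtain ⟨N, hN⟩ := eventually_atTop.1 hev
      refine ⟨N, fun n hn => ?_⟩
      obtain ⟨hlo, hhi⟩ := hN n hn
      have hb1 : sC - ε' < b n := by
        by_contra hcon
        push_neg at hcon
        rcases lt_or_eq_of_le hcon with hlt | heq
        · have := BFDRaux.hh_strictMono h (hbpos n) hlt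
          linarith
        · rw [heq] at hlo
          linarith
      have hb2 : b n < sC + ε' := by
        by_contra hcon
        push_neg at hcon
        rcases lt_or_eq_of_le hcon with hlt | heq
        · have := BFDRaux.hh_strictMono h (show (0:ℝ) < sC + ε' by linarith) hlt
          linarith
        · rw [← heq] at hhi
          linarith
      rw [Real.dist_eq, abs_lt]
      have hem := min_le_left ε (sC/2)
      constructor <;> linarith
    have hm := hbl.mul (hrpow1 ((1:ℝ)/2) _ hq2)
    rw [mul_one] at hm
    exact hm.congr fun m => (hwb m).symm
  -- assemble the iff
  constructor
  · intro hABOS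
    have hw : Tendsto w atTop (nhds sC) := by
      have h1 : Tendsto (fun m => ωB m ^ 2 / (C * u m)) atTop (nhds 1) := by
        have hmul := hABOS.mul hE
        rw [mul_one] at hmul
        refine hmul.congr fun m => ?_
        have hum := hu m
        have hEp : (0:ℝ) < (v m / C0) ^ (2 / γ) :=
          Real.rpow_pos_of_pos (div_pos (hvpos m) hC0) _
        field_simp
      have h2 : Tendsto (fun m => w m ^ 2) atTop (nhds C) := by
        have hmul := h1.mul_const C
        rw [one_mul] at hmul
        refine hmul.congr fun m => ?_
        have hum := hu m
        have husq : (u m ^ ((1:ℝ)/2)) ^ (2:ℕ) = u m := by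
          rw [← Real.rpow_natCast (u m ^ ((1:ℝ)/2)) 2, ← Real.rpow_mul hum.le]
          norm_num
        rw [hwdef]
        simp only
        rw [div_pow, husq]
        field_simp
      have h3 := (Real.continuous_sqrt.tendsto C).comp h2
      rw [show Real.sqrt C = sC from rfl] at h3
      refine h3.congr fun m => ?_
      exact Real.sqrt_sq (hwpos m).le
    exact hδr_of_w hw
  · intro hδr
    have hw := hw_of_δr hδr
    have h1 : Tendsto (fun m => w m ^ 2 / C) atTop (nhds 1) := by
      have hmul := (hw.mul hw).div_const C
      have hmm : sC * sC = C := Real.mul_self_sqrt hC.le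
      rw [hmm, div_self hC.ne'] at hmul
      refine hmul.congr fun m => ?_
      rw [sq]
    have h2 := h1.div hE one_ne_zero
    rw [div_one] at h2
    refine h2.congr fun m => ?_
    have hum := hu m
    have hEp : (0:ℝ) < (v m / C0) ^ (2 / γ) :=
      Real.rpow_pos_of_pos (div_pos (hvpos m) hC0) _
    have husq : (u m ^ ((1:ℝ)/2)) ^ (2:ℕ) = u m := by
      rw [← Real.rpow_natCast (u m ^ ((1:ℝ)/2)) 2, ← Real.rpow_mul hum.le]
      norm_num
    rw [hwdef]
    simp only [Pi.div_apply]
    rw [div_pow, husq]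
    field_simp
end

section
/- Under the asymptotic framework with p_m → 0, let α_m ∈ (0,1) with lim sup α_m < 1, and let ω_{GW,m} > 0 be a solution of the Genovese–Wasserman equation (1 − D(ω)) / [(1−p_m)(1 − D(ω)) + p_m(1 − D(ω·(1+u_m)^(−1/2)))] = α_m. Then the procedure that rejects the i-th null when X_i²/σ_0² ≥ ω_{GW,m}² is asymptotically Bayes optimal under sparsity, i.e., ω_{GW,m}²/(C·(v_m/C_0)^(2/γ)) → 1, if and only if δ_m·r_{α_m} → C_1/(1 − C_2), where r_α = α/(1−α); and in that case ω_{GW,m}²/(C_B·(f_m/r_{α_m})^(2/γ)) → 1, where C_B = [(C_d/γ)/(1 − D(√C))]^(2/γ). -/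
open MeasureTheory Filter

namespace GWaux

open Set Real

variable {d : ℝ → ℝ} {γ Cd : ℝ}

lemma g_strictMono (h : IsMPT d γ Cd) :
    StrictMonoOn (fun x => d x * x ^ (γ + 1)) (Set.Ioi 0) := by
  intro a ha b hb hab
  simp only [Set.mem_Ioi] at ha hb
  set θ := b / a with hθdef
  have hθ : 1 < θ := (one_lt_div ha).2 hab
  have hθ0 : 0 < θ := lt_trans one_pos hθ
  have hmlr := h.mlr θ hθ
  have hratio : Tendsto (fun x => d (x / θ) / d x) atTop (nhds (θ ^ (γ + 1))) := by
    have h1 : Tendsto (fun x : ℝ => x / θ) atTop atTop := tendsto_id.atTop_div_const hθ0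
    have h2 : Tendsto (fun x => d (x / θ) * (x / θ) ^ (γ + 1)) atTop (nhds Cd) := h.tail.comp h1
    have h3 : Tendsto (fun x => (d (x / θ) * (x / θ) ^ (γ + 1)) / (d x * x ^ (γ + 1)) * θ ^ (γ + 1))
        atTop (nhds (Cd / Cd * θ ^ (γ + 1))) := (h2.div h.tail h.Cd_pos.ne').mul_const _
    rw [div_self h.Cd_pos.ne', one_mul] at h3
    refine h3.congr' ?_
    filter_upwards [eventually_gt_atTop 0] with x hx
    have hd : d x ≠ 0 := (h.pos x hx).ne'
    have hxp : (0:ℝ) < x ^ (γ + 1) := Real.rpow_pos_of_pos hx _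
    have hθp : (0:ℝ) < θ ^ (γ + 1) := Real.rpow_pos_of_pos hθ0 _
    have hdr : (x / θ) ^ (γ + 1) = x ^ (γ + 1) / θ ^ (γ + 1) := Real.div_rpow hx.le hθ0.le _
    rw [hdr]
    field_simp
  have hb1 : (b:ℝ) < b + 1 := lt_add_one b
  have hbm : b ∈ Set.Ioi (0:ℝ) := hb
  have hbm1 : b + 1 ∈ Set.Ioi (0:ℝ) := by simp only [Set.mem_Ioi]; linarith
  have h5 : d (b / θ) / d b < d ((b + 1) / θ) / d (b + 1) := hmlr hbm hbm1 hb1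
  have h6 : d ((b + 1) / θ) / d (b + 1) ≤ θ ^ (γ + 1) := by
    refine ge_of_tendsto hratio ?_
    filter_upwards [eventually_ge_atTop (b + 1)] with x hx
    rcases eq_or_lt_of_le hx with rfl | hlt
    · exact le_rfl
    · exact le_of_lt (hmlr hbm1 (by simp only [Set.mem_Ioi]; linarith) hlt)
  have h7 : d (b / θ) / d b < θ ^ (γ + 1) := lt_of_lt_of_le h5 h6
  have hba : b / θ = a := by field_simp [hθdef]; rw [hθdef, div_mul_cancel₀ b ha.ne']
  rw [hba] at h7
  have hdb : 0 < d b := h.pos b hb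
  have h8 : d a < θ ^ (γ + 1) * d b := by
    rw [div_lt_iff₀ hdb] at h7; linarith
  have h9 : b ^ (γ + 1) = θ ^ (γ + 1) * a ^ (γ + 1) := by
    rw [← Real.mul_rpow hθ0.le ha.le]
    congr 1
    field_simp [hθdef]; rw [hθdef, div_mul_cancel₀ b ha.ne']
  calc d a * a ^ (γ + 1) < (θ ^ (γ + 1) * d b) * a ^ (γ + 1) :=
        mul_lt_mul_of_pos_right h8 (Real.rpow_pos_of_pos ha _)
    _ = d b * b ^ (γ + 1) := by rw [h9]; ring

lemma g_lt (h : IsMPT d γ Cd) {x : ℝ} (hx : 0 < x) : d x * x ^ (γ + 1) < Cd := by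
  have h1 : d x * x ^ (γ + 1) < d (x + 1) * (x + 1) ^ (γ + 1) :=
    g_strictMono h hx (by simp only [Set.mem_Ioi]; linarith) (lt_add_one x)
  have h2 : d (x + 1) * (x + 1) ^ (γ + 1) ≤ Cd := by
    refine ge_of_tendsto h.tail ?_
    filter_upwards [eventually_ge_atTop (x + 1)] with y hy
    rcases eq_or_lt_of_le hy with rfl | hlt
    · exact le_rfl
    · have := g_strictMono h (show x + 1 ∈ Set.Ioi (0:ℝ) by simp only [Set.mem_Ioi]; linarith)
        (show y ∈ Set.Ioi (0:ℝ) by simp only [Set.mem_Ioi]; linarith) hlt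
      simpa using this.le
  linarith

lemma one_sub_cdf (h : IsMPT d γ Cd) (x : ℝ) : 1 - cdf d x = ∫ t in Set.Ioi x, d t := by
  have := intervalIntegral.integral_Iic_add_Ioi (b := x)
    h.integrable.integrableOn h.integrable.integrableOn
  rw [h.integral_one] at this
  rw [cdf]
  linarith

lemma tailint_pos (h : IsMPT d γ Cd) (x : ℝ) : 0 < ∫ t in Set.Ioi x, d t := by
  rw [setIntegral_pos_iff_support_of_nonneg_ae (ae_of_all _ h.nonneg) h.integrable.integrableOn]
  refine lt_of_lt_of_le ?_ (measure_mono (?_ : Set.Ioi (max x 0) ⊆ _))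
  · rw [Real.volume_Ioi]; exact ENNReal.zero_lt_top
  · intro t ht
    simp only [Set.mem_Ioi] at ht
    have ht0 : 0 < t := lt_of_le_of_lt (le_max_right x 0) ht
    have htx : x < t := lt_of_le_of_lt (le_max_left x 0) ht
    exact ⟨(h.pos t ht0).ne', htx⟩

lemma cdf_nonneg (h : IsMPT d γ Cd) (x : ℝ) : 0 ≤ cdf d x :=
  setIntegral_nonneg measurableSet_Iic fun t _ => h.nonneg t

lemma cdf_lt_one (h : IsMPT d γ Cd) (x : ℝ) : cdf d x < 1 := by
  have := one_sub_cdf h x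
  have := tailint_pos h x
  linarith

lemma cdf_mono (h : IsMPT d γ Cd) : Monotone (cdf d) := fun a b hab =>
  setIntegral_mono_set h.integrable.integrableOn (ae_of_all _ h.nonneg)
    (HasSubset.Subset.eventuallyLE (Set.Iic_subset_Iic.2 hab))

lemma cdf_continuous (h : IsMPT d γ Cd) : Continuous (cdf d) := by
  have hpr : Continuous fun b => ∫ t in (0:ℝ)..b, d t :=
    intervalIntegral.continuous_primitive (fun a b => h.integrable.intervalIntegrable) 0
  have heq : cdf d = fun x => cdf d 0 + ∫ t in (0:ℝ)..x, d t := by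
    funext x
    rw [← intervalIntegral.integral_Iic_sub_Iic h.integrable.integrableOn
      h.integrable.integrableOn]
    simp [cdf]
  rw [heq]
  exact continuous_const.add hpr

lemma cdf_strict (h : IsMPT d γ Cd) {a b : ℝ} (ha : 0 < a) (hab : a < b) :
    cdf d a < cdf d b := by
  have hpos : 0 < ∫ t in a..b, d t := by
    refine intervalIntegral.intervalIntegral_pos_of_pos_on
      h.integrable.intervalIntegrable (fun x hx => h.pos x (lt_trans ha hx.1)) hab
  have := intervalIntegral.integral_Iic_sub_Iic (μ := volume) (f := d) (a := a) (b := b)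
    h.integrable.integrableOn h.integrable.integrableOn
  rw [cdf, cdf]
  linarith [this]

lemma int_rpow (hγ : 0 < γ) {x : ℝ} (hx : 0 < x) :
    ∫ t in Set.Ioi x, t ^ (-(γ + 1)) = x ^ (-γ) / γ := by
  rw [integral_Ioi_rpow_of_lt (by linarith) hx, show -(γ + 1) + 1 = -γ by ring]
  rw [show -x ^ (-γ) / -γ = x ^ (-γ) / γ by rw [neg_div_neg_eq]]

lemma tail_upper (h : IsMPT d γ Cd) {x : ℝ} (hx : 0 < x) :
    ∫ t in Set.Ioi x, d t < Cd / γ * x ^ (-γ) := by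
  have hγ := h.gamma_pos
  have hInt1 : IntegrableOn (fun t : ℝ => t ^ (-(γ + 1))) (Set.Ioi x) :=
    integrableOn_Ioi_rpow_of_lt (by linarith) hx
  have hInt2 : IntegrableOn (fun t : ℝ => Cd * t ^ (-(γ + 1))) (Set.Ioi x) :=
    hInt1.const_mul Cd
  have hlt : ∀ t ∈ Set.Ioi x, d t < Cd * t ^ (-(γ + 1)) := by
    intro t ht
    simp only [Set.mem_Ioi] at ht
    have ht0 : 0 < t := lt_trans hx ht
    have hg := g_lt h ht0
    have htp : (0:ℝ) < t ^ (γ + 1) := Real.rpow_pos_of_pos ht0 _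
    rw [Real.rpow_neg ht0.le, ← div_eq_mul_inv, lt_div_iff₀ htp]
    exact hg
  have hsub : 0 < ∫ t in Set.Ioi x, (Cd * t ^ (-(γ + 1)) - d t) := by
    rw [setIntegral_pos_iff_support_of_nonneg_ae
      ((ae_restrict_iff' measurableSet_Ioi).2
        (ae_of_all _ fun t ht => sub_nonneg.2 (hlt t ht).le))
      (hInt2.sub h.integrable.integrableOn)]
    refine lt_of_lt_of_le ?_ (measure_mono (?_ : Set.Ioi x ⊆ _))
    · rw [Real.volume_Ioi]; exact ENNReal.zero_lt_top
    · exact fun t ht => ⟨(sub_pos.2 (hlt t ht)).ne', ht⟩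
  rw [integral_sub hInt2 h.integrable.integrableOn, integral_const_mul,
    int_rpow hγ hx] at hsub
  have : Cd / γ * x ^ (-γ) = Cd * (x ^ (-γ) / γ) := by ring
  linarith

lemma tail_lower (h : IsMPT d γ Cd) {x : ℝ} (hx : 0 < x) :
    d x * x ^ (γ + 1) * (x ^ (-γ) / γ) ≤ ∫ t in Set.Ioi x, d t := by
  have hγ := h.gamma_pos
  have hInt1 : IntegrableOn (fun t : ℝ => t ^ (-(γ + 1))) (Set.Ioi x) :=
    integrableOn_Ioi_rpow_of_lt (by linarith) hx
  have hmono := setIntegral_mono_on (hInt1.const_mul (d x * x ^ (γ + 1)))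
    h.integrable.integrableOn measurableSet_Ioi ?_
  · rwa [integral_const_mul, int_rpow hγ hx] at hmono
  · intro t ht
    simp only [Set.mem_Ioi] at ht
    have ht0 : 0 < t := lt_trans hx ht
    have hgm : d x * x ^ (γ + 1) ≤ d t * t ^ (γ + 1) :=
      (g_strictMono h (Set.mem_Ioi.2 hx) (Set.mem_Ioi.2 ht0) ht).le
    have htp : (0:ℝ) < t ^ (γ + 1) := Real.rpow_pos_of_pos ht0 _
    calc d x * x ^ (γ + 1) * t ^ (-(γ + 1))
        ≤ d t * t ^ (γ + 1) * t ^ (-(γ + 1)) := by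
          have hnn : (0:ℝ) ≤ t ^ (-(γ + 1)) := (Real.rpow_pos_of_pos ht0 _).le
          exact mul_le_mul_of_nonneg_right hgm hnn
      _ = d t := by
          rw [Real.rpow_neg ht0.le, mul_assoc, mul_inv_cancel₀ htp.ne', mul_one]

lemma tail_lim (h : IsMPT d γ Cd) :
    Tendsto (fun x => x ^ γ * ∫ t in Set.Ioi x, d t) atTop (nhds (Cd / γ)) := by
  have hγ := h.gamma_pos
  refine tendsto_of_tendsto_of_tendsto_of_le_of_le'
    (g := fun x => d x * x ^ (γ + 1) / γ) (h := fun _ => Cd / γ)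
    (h.tail.div_const γ) tendsto_const_nhds ?_ ?_
  · filter_upwards [eventually_gt_atTop 0] with x hx
    have hxx : x ^ γ * x ^ (-γ) = 1 := by
      rw [← Real.rpow_add hx]; simp
    have hm := mul_le_mul_of_nonneg_left (tail_lower h hx) (Real.rpow_nonneg hx.le γ)
    rw [show x ^ γ * (d x * x ^ (γ + 1) * (x ^ (-γ) / γ))
        = d x * x ^ (γ + 1) / γ * (x ^ γ * x ^ (-γ)) by ring, hxx, mul_one] at hm
    exact hm
  · filter_upwards [eventually_gt_atTop 0] with x hx
    have hxx : x ^ γ * x ^ (-γ) = 1 := by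
      rw [← Real.rpow_add hx]; simp
    have hm := mul_le_mul_of_nonneg_left (tail_upper h hx).le (Real.rpow_nonneg hx.le γ)
    rw [show x ^ γ * (Cd / γ * x ^ (-γ)) = Cd / γ * (x ^ γ * x ^ (-γ)) by ring,
      hxx, mul_one] at hm
    exact hm

lemma H_eq (h : IsMPT d γ Cd) {t : ℝ} (ht : 0 < t) :
    t ^ γ * ∫ s in Set.Ioi t, d s = ∫ y in Set.Ioi 1, t ^ (γ + 1) * d (t * y) := by
  have hcv := integral_comp_mul_left_Ioi d 1 ht
  rw [mul_one] at hcv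
  rw [integral_const_mul, hcv, smul_eq_mul, ← mul_assoc]
  congr 1
  rw [Real.rpow_add ht, Real.rpow_one]
  field_simp

lemma H_strictMono (h : IsMPT d γ Cd) :
    StrictMonoOn (fun x => x ^ γ * ∫ s in Set.Ioi x, d s) (Set.Ioi 0) := by
  intro a ha b hb hab
  simp only [Set.mem_Ioi] at ha hb
  simp only []
  rw [H_eq h ha, H_eq h hb]
  have hIa : IntegrableOn (fun y => a ^ (γ + 1) * d (a * y)) (Set.Ioi 1) :=
    ((h.integrable.comp_mul_left' ha.ne').const_mul _).integrableOn
  have hIb : IntegrableOn (fun y => b ^ (γ + 1) * d (b * y)) (Set.Ioi 1) :=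
    ((h.integrable.comp_mul_left' hb.ne').const_mul _).integrableOn
  have hlt : ∀ y ∈ Set.Ioi (1:ℝ), a ^ (γ + 1) * d (a * y) < b ^ (γ + 1) * d (b * y) := by
    intro y hy
    simp only [Set.mem_Ioi] at hy
    have hy0 : 0 < y := lt_trans one_pos hy
    have h1 : d (a * y) * (a * y) ^ (γ + 1) < d (b * y) * (b * y) ^ (γ + 1) :=
      g_strictMono h (Set.mem_Ioi.2 (mul_pos ha hy0)) (Set.mem_Ioi.2 (mul_pos hb hy0))
        (by nlinarith)
    rw [Real.mul_rpow ha.le hy0.le, Real.mul_rpow hb.le hy0.le] at h1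
    have hyp : (0:ℝ) < y ^ (γ + 1) := Real.rpow_pos_of_pos hy0 _
    have h2 : a ^ (γ + 1) * d (a * y) * y ^ (γ + 1)
        < b ^ (γ + 1) * d (b * y) * y ^ (γ + 1) := by
      calc a ^ (γ + 1) * d (a * y) * y ^ (γ + 1)
          = d (a * y) * (a ^ (γ + 1) * y ^ (γ + 1)) := by ring
        _ < d (b * y) * (b ^ (γ + 1) * y ^ (γ + 1)) := h1
        _ = b ^ (γ + 1) * d (b * y) * y ^ (γ + 1) := by ring
    exact lt_of_mul_lt_mul_right h2 hyp.le
  have hsub : 0 < ∫ y in Set.Ioi 1,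
      (b ^ (γ + 1) * d (b * y) - a ^ (γ + 1) * d (a * y)) := by
    rw [setIntegral_pos_iff_support_of_nonneg_ae
      ((ae_restrict_iff' measurableSet_Ioi).2
        (ae_of_all _ fun y hy => sub_nonneg.2 (hlt y hy).le))
      (hIb.sub hIa)]
    refine lt_of_lt_of_le ?_ (measure_mono (?_ : Set.Ioi (1:ℝ) ⊆ _))
    · rw [Real.volume_Ioi]; exact ENNReal.zero_lt_top
    · exact fun y hy => ⟨(sub_pos.2 (hlt y hy)).ne', hy⟩
  rw [integral_sub hIb hIa] at hsub
  linarith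

lemma final_algebra (w c cb x z : ℝ) (hc : 0 < c) (hcb : 0 < cb) (hx : 0 < x) (hz : 0 < z) :
    w / (c * (x * z)) * (c / cb * x) = w / (cb * z) := by
  rw [div_mul_eq_mul_div, div_eq_div_iff (by positivity) (by positivity)]
  field_simp

end GWaux

set_option maxHeartbeats 2000000 in
open Real in
/-- Proposition 4 (Genovese–Wasserman procedure): under the asymptotic framework with
`p_m → 0` and `limsup α_m < 1`, the Genovese–Wasserman threshold `ω_{GW,m}` solving
`(1 - D ω) / ((1 - p_m) * (1 - D ω) + p_m * (1 - D (ω * (1 + u_m) ^ (-1/2)))) = α_m`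
is ABOS if and only if `δ_m * r_{α_m} → C₁ / (1 - C₂)`; and in that case
`ω_{GW,m} ^ 2 / (C_B * (f_m / r_{α_m}) ^ (2/γ)) → 1`. -/
theorem GW_procedure_ABOS (d : ℝ → ℝ) (γ Cd : ℝ) (h : IsMPT d γ Cd)
    (heven : ∀ x, d (-x) = d x) (hcont : ContinuousOn d (Set.Ioi 0))
    (C : ℝ) (hC : 0 < C)
    (p : ℕ → ℝ) (hp : ∀ m, p m ∈ Set.Ioo (0 : ℝ) 1) (hp0 : Tendsto p atTop (nhds 0))
    (u : ℕ → ℝ) (hu : ∀ m, 0 < u m) (hu' : Tendsto u atTop atTop)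
    (δ : ℕ → ℝ) (hδ : ∀ m, 0 < δ m)
    (f v : ℕ → ℝ) (hf : ∀ m, f m = (1 - p m) / p m) (hv : ∀ m, v m = δ m * f m)
    (hvu : Tendsto (fun m => v m * u m ^ (-(γ / 2))) atTop
      (nhds (C ^ ((γ + 1) / 2) * d (Real.sqrt C) / Cd)))
    (α : ℕ → ℝ) (hα : ∀ m, α m ∈ Set.Ioo (0 : ℝ) 1) (hαsup : limsup α atTop < 1)
    (ωGW : ℕ → ℝ) (hωGW : ∀ m, 0 < ωGW m)
    (hωGWeq : ∀ m, (1 - cdf d (ωGW m)) /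
        ((1 - p m) * (1 - cdf d (ωGW m))
          + p m * (1 - cdf d (ωGW m * (1 + u m) ^ (-(1 : ℝ) / 2))))
      = α m) :
    (Tendsto
      (fun m => ωGW m ^ 2 / (C * (v m / (C ^ ((γ + 1) / 2) * d (Real.sqrt C) / Cd)) ^ (2 / γ)))
      atTop (nhds 1) ↔
    Tendsto (fun m => δ m * (α m / (1 - α m))) atTop
      (nhds ((2 * Real.sqrt C * d (Real.sqrt C) / γ)
        / (1 - (2 * cdf d (Real.sqrt C) - 1))))) ∧
    (Tendsto (fun m => δ m * (α m / (1 - α m))) atTop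
      (nhds ((2 * Real.sqrt C * d (Real.sqrt C) / γ)
        / (1 - (2 * cdf d (Real.sqrt C) - 1)))) →
      Tendsto
        (fun m => ωGW m ^ 2 /
          (((Cd / γ) / (1 - cdf d (Real.sqrt C))) ^ (2 / γ)
            * (f m / (α m / (1 - α m))) ^ (2 / γ)))
        atTop (nhds 1)) := by
  have hγ := h.gamma_pos
  have hγne : γ ≠ 0 := hγ.ne'
  have hCd := h.Cd_pos
  have hsC : 0 < Real.sqrt C := Real.sqrt_pos.2 hC
  set dC : ℝ := d (Real.sqrt C) with hdCdef
  have hdC : 0 < dC := h.pos _ hsC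
  set DC : ℝ := cdf d (Real.sqrt C) with hDCdef
  set C0 : ℝ := C ^ ((γ + 1) / 2) * dC / Cd with hC0def
  set L : ℝ := (2 * Real.sqrt C * dC / γ) / (1 - (2 * DC - 1)) with hLdef
  have hC0 : 0 < C0 := div_pos (mul_pos (Real.rpow_pos_of_pos hC _) hdC) hCd
  have hDC1 : 0 < 1 - DC := sub_pos.2 (GWaux.cdf_lt_one h (Real.sqrt C))
  have hL2 : 1 - (2 * DC - 1) = 2 * (1 - DC) := by ring
  have hLpos : 0 < L := by
    rw [hLdef, hL2]
    exact div_pos (div_pos (by positivity) hγ) (by linarith)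
  set t : ℕ → ℝ := fun m => ωGW m * (1 + u m) ^ (-(1 : ℝ) / 2) with htdef
  set A : ℕ → ℝ := fun m => 1 - cdf d (ωGW m) with hAdef
  set B : ℕ → ℝ := fun m => 1 - cdf d (t m) with hBdef
  have ht_eq : ∀ m, ωGW m * (1 + u m) ^ (-(1 : ℝ) / 2) = t m := fun _ => rfl
  have hA_eq : ∀ m, 1 - cdf d (ωGW m) = A m := fun _ => rfl
  have hB_eq : ∀ m, 1 - cdf d (t m) = B m := fun _ => rfl
  have hu1 : ∀ m, (0 : ℝ) < 1 + u m := fun m => by linarith [hu m]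
  have htpos : ∀ m, 0 < t m := fun m => mul_pos (hωGW m) (Real.rpow_pos_of_pos (hu1 m) _)
  have htlt : ∀ m, t m < ωGW m := by
    intro m
    have h1 : (1 + u m) ^ (-(1 : ℝ) / 2) < 1 :=
      Real.rpow_lt_one_of_one_lt_of_neg (by linarith [hu m]) (by norm_num)
    calc t m = ωGW m * (1 + u m) ^ (-(1 : ℝ) / 2) := rfl
      _ < ωGW m * 1 := mul_lt_mul_of_pos_left h1 (hωGW m)
      _ = ωGW m := mul_one _
  have hApos : ∀ m, 0 < A m := fun m => sub_pos.2 (GWaux.cdf_lt_one h _)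
  have hBpos : ∀ m, 0 < B m := fun m => sub_pos.2 (GWaux.cdf_lt_one h _)
  have hAB : ∀ m, A m < B m := by
    intro m
    have := GWaux.cdf_strict h (htpos m) (htlt m)
    simp only [hAdef, hBdef]
    linarith
  have hBle : ∀ m, B m ≤ 1 := by
    intro m
    have := GWaux.cdf_nonneg h (t m)
    simp only [hBdef]
    linarith
  have hpm : ∀ m, 0 < p m := fun m => (hp m).1
  have hpm1 : ∀ m, p m < 1 := fun m => (hp m).2
  have hαm : ∀ m, 0 < α m := fun m => (hα m).1
  have hαm1 : ∀ m, α m < 1 := fun m => (hα m).2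
  have hα1 : ∀ m, (0 : ℝ) < 1 - α m := fun m => by linarith [hαm1 m]
  have hrpos : ∀ m, 0 < α m / (1 - α m) := fun m => div_pos (hαm m) (hα1 m)
  have hfpos : ∀ m, 0 < f m := fun m => by
    rw [hf m]; exact div_pos (by linarith [hpm1 m]) (hpm m)
  have hvpos : ∀ m, 0 < v m := fun m => by rw [hv m]; exact mul_pos (hδ m) (hfpos m)
  clear_value dC DC C0 L t A B
  -- key identity from the GW equation
  have keyid : ∀ m, A m * (1 - α m) = α m * p m * (B m - A m) := by
    intro m
    have heq := hωGWeq m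
    rw [ht_eq m, hA_eq m, hB_eq m] at heq
    have hden : (1 - p m) * A m + p m * B m ≠ 0 :=
      (add_pos (mul_pos (by linarith [hpm1 m]) (hApos m)) (mul_pos (hpm m) (hBpos m))).ne'
    rw [div_eq_iff hden] at heq
    linear_combination heq
  -- uniform bound on α away from 1
  obtain ⟨c, hc1, hcev⟩ : ∃ c : ℝ, c < 1 ∧ ∀ᶠ m in atTop, α m < c := by
    refine ⟨(limsup α atTop + 1) / 2, by linarith, ?_⟩
    exact eventually_lt_of_limsup_lt (by linarith)
      (isBoundedUnder_of ⟨1, fun m => (hαm1 m).le⟩)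
  -- A tends to 0
  have hA0 : Tendsto A atTop (nhds 0) := by
    have hsq : Tendsto (fun m => p m / (1 - c)) atTop (nhds 0) := by
      simpa using hp0.div_const (1 - c)
    refine tendsto_of_tendsto_of_tendsto_of_le_of_le' tendsto_const_nhds hsq
      (Eventually.of_forall fun m => (hApos m).le) ?_
    filter_upwards [hcev] with m hm
    have h1 := keyid m
    have h2 : α m * p m * (B m - A m) ≤ p m := by
      have hBA1 : B m - A m ≤ 1 := by linarith [hBle m, hApos m]
      have hBA0 : 0 ≤ B m - A m := by linarith [hAB m]
      nlinarith [mul_le_mul_of_nonneg_left hBA1 (mul_pos (hαm m) (hpm m)).le,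
        hpm m, hαm1 m, hαm m]
    have h3 : 1 - c ≤ 1 - α m := by linarith
    have h4 : A m * (1 - c) ≤ p m := by
      have h5 := mul_le_mul_of_nonneg_left h3 (hApos m).le
      linarith
    rw [le_div_iff₀ (by linarith : (0 : ℝ) < 1 - c)]
    linarith
  -- ω tends to infinity
  have hωtop : Tendsto ωGW atTop atTop := by
    rw [tendsto_atTop]
    intro M
    have hε : 0 < ∫ s in Set.Ioi (max M 1), d s := GWaux.tailint_pos h _
    filter_upwards [hA0.eventually_lt_const hε] with m hm
    by_contra hcon
    push_neg at hcon
    have hsub : ∫ s in Set.Ioi (max M 1), d s ≤ ∫ s in Set.Ioi (ωGW m), d s :=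
      setIntegral_mono_set h.integrable.integrableOn (ae_of_all _ h.nonneg)
        (HasSubset.Subset.eventuallyLE
          (Set.Ioi_subset_Ioi (le_trans hcon.le (le_max_left M 1))))
    have hAm : A m = ∫ s in Set.Ioi (ωGW m), d s := by
      rw [← hA_eq m, GWaux.one_sub_cdf h]
    rw [hAm] at hm
    linarith
  -- ω^γ * A → Cd/γ
  have hHω : Tendsto (fun m => ωGW m ^ γ * A m) atTop (nhds (Cd / γ)) := by
    refine ((GWaux.tail_lim h).comp hωtop).congr fun m => ?_
    simp only [Function.comp_apply]
    rw [← GWaux.one_sub_cdf h (ωGW m), hA_eq m]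
  have hu1top : Tendsto (fun m => 1 + u m) atTop atTop :=
    tendsto_atTop_add_const_left atTop 1 hu'
  have hupow0 : Tendsto (fun m => (1 + u m) ^ (-(γ / 2))) atTop (nhds 0) :=
    (tendsto_rpow_neg_atTop (by linarith)).comp hu1top
  have huu1 : Tendsto (fun m => u m / (1 + u m)) atTop (nhds 1) := by
    have h1 : Tendsto (fun m => (1 + u m)⁻¹) atTop (nhds 0) := hu1top.inv_tendsto_atTop
    have h2 : Tendsto (fun m => 1 - (1 + u m)⁻¹) atTop (nhds (1 - 0)) :=
      tendsto_const_nhds.sub h1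
    rw [sub_zero] at h2
    refine h2.congr fun m => ?_
    field_simp [(hu1 m).ne']
    ring
  have hrpow_cont : ∀ q : ℝ, Tendsto (fun x : ℝ => x ^ q) (nhds 1) (nhds 1) := by
    intro q
    have := (Real.continuousAt_rpow_const 1 q (Or.inl one_ne_zero)).tendsto
    simpa using this
  have hupow1 : Tendsto (fun m => (u m / (1 + u m)) ^ (γ / 2)) atTop (nhds 1) :=
    (hrpow_cont (γ / 2)).comp huu1
  -- E_m := v_m (1+u_m)^{-γ/2} → C0
  have hveq : ∀ m, v m * (1 + u m) ^ (-(γ / 2))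
      = v m * u m ^ (-(γ / 2)) * (u m / (1 + u m)) ^ (γ / 2) := by
    intro m
    rw [Real.rpow_neg (hu1 m).le, Real.rpow_neg (hu m).le,
      Real.div_rpow (hu m).le (hu1 m).le]
    have h1 : (0 : ℝ) < u m ^ (γ / 2) := Real.rpow_pos_of_pos (hu m) _
    have h2 : (0 : ℝ) < (1 + u m) ^ (γ / 2) := Real.rpow_pos_of_pos (hu1 m) _
    field_simp
  have hE : Tendsto (fun m => v m * (1 + u m) ^ (-(γ / 2))) atTop (nhds C0) := by
    have h1 := hvu.mul hupow1
    rw [mul_one] at h1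
    exact h1.congr fun m => (hveq m).symm
  -- G_m → K := C0 * (Cd/γ)
  have hG : Tendsto (fun m => v m * (1 + u m) ^ (-(γ / 2)) * (ωGW m ^ γ * A m)) atTop
      (nhds (C0 * (Cd / γ))) := hE.mul hHω
  -- ω^γ in terms of t^γ
  have hωt : ∀ m, ωGW m ^ γ = t m ^ γ * (1 + u m) ^ (γ / 2) := by
    intro m
    have h1 : t m * (1 + u m) ^ ((1 : ℝ) / 2) = ωGW m := by
      rw [← ht_eq m, mul_assoc, ← Real.rpow_add (hu1 m)]
      norm_num
    rw [← h1, Real.mul_rpow (htpos m).le (Real.rpow_pos_of_pos (hu1 m) _).le,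
      ← Real.rpow_mul (hu1 m).le, show (1 : ℝ) / 2 * γ = γ / 2 by ring]
  -- v_m A_m = G_m t_m^{-γ}
  have hvA : ∀ m, v m * A m
      = v m * (1 + u m) ^ (-(γ / 2)) * (ωGW m ^ γ * A m) * t m ^ (-γ) := by
    intro m
    rw [hωt m]
    have e1 : (1 + u m) ^ (-(γ / 2)) * (1 + u m) ^ (γ / 2) = 1 := by
      rw [← Real.rpow_add (hu1 m), show -(γ / 2) + γ / 2 = (0 : ℝ) by ring, Real.rpow_zero]
    have e2 : t m ^ γ * t m ^ (-γ) = 1 := by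
      rw [← Real.rpow_add (htpos m), show γ + -γ = (0 : ℝ) by ring, Real.rpow_zero]
    calc v m * A m
        = v m * A m * ((1 + u m) ^ (-(γ / 2)) * (1 + u m) ^ (γ / 2))
          * (t m ^ γ * t m ^ (-γ)) := by rw [e1, e2]; ring
      _ = _ := by ring
  -- master per-m identity
  have hδr : ∀ m, δ m * (α m / (1 - α m)) * ((1 - p m) * (B m - A m)) = v m * A m := by
    intro m
    have h1 := keyid m
    have hv' : v m = δ m * ((1 - p m) / p m) := by rw [hv m, hf m]
    have k1 : α m * (B m - A m) = A m * (1 - α m) / p m := by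
      rw [eq_div_iff (hpm m).ne']
      linear_combination -h1
    calc δ m * (α m / (1 - α m)) * ((1 - p m) * (B m - A m))
        = δ m * (1 - p m) * (α m * (B m - A m)) / (1 - α m) := by ring
      _ = δ m * (1 - p m) * (A m * (1 - α m) / p m) / (1 - α m) := by rw [k1]
      _ = δ m * ((1 - p m) / p m) * A m := by
          field_simp [(hpm m).ne', (hα1 m).ne']
      _ = v m * A m := by rw [hv']
  -- W_m/u_m → 1 where W_m = (v_m/C0)^{2/γ}
  have hW : Tendsto (fun m => (v m / C0) ^ (2 / γ) / u m) atTop (nhds 1) := by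
    have hW0 : Tendsto (fun m => v m / C0 * u m ^ (-(γ / 2))) atTop (nhds 1) := by
      have h1 := hvu.div_const C0
      rw [div_self hC0.ne'] at h1
      exact h1.congr fun m => by ring
    have h2 := (hrpow_cont (2 / γ)).comp hW0
    refine h2.congr fun m => ?_
    simp only [Function.comp_apply]
    rw [Real.mul_rpow (div_pos (hvpos m) hC0).le (Real.rpow_pos_of_pos (hu m) _).le,
      ← Real.rpow_mul (hu m).le, show -(γ / 2) * (2 / γ) = -1 by field_simp,
      Real.rpow_neg_one]
    ring
  have hWpos : ∀ m, (0 : ℝ) < (v m / C0) ^ (2 / γ) :=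
    fun m => Real.rpow_pos_of_pos (div_pos (hvpos m) hC0) _
  -- t^2 in terms of ω^2
  have htsq : ∀ m, t m ^ 2 = ωGW m ^ 2 * (1 + u m)⁻¹ := by
    intro m
    rw [← ht_eq m, mul_pow]
    congr 1
    rw [← Real.rpow_natCast ((1 + u m) ^ (-(1 : ℝ) / 2)) 2, ← Real.rpow_mul (hu1 m).le]
    norm_num [Real.rpow_neg_one]
  have hω2 : ∀ m, ωGW m ^ 2 = t m ^ 2 * (1 + u m) := by
    intro m
    rw [htsq m]
    field_simp [(hu1 m).ne']
  -- value identity: C0*(Cd/γ)*√C^{-γ}/(1*(1-DC)) = L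
  have e3 : Real.sqrt C = C ^ ((1 : ℝ) / 2) := Real.sqrt_eq_rpow C
  have e4' : C ^ ((γ + 1) / 2) * C ^ (-(γ / 2)) = C ^ ((1 : ℝ) / 2) := by
    rw [← Real.rpow_add hC, show (γ + 1) / 2 + -(γ / 2) = 1 / 2 by ring]
  have hKL : C0 * (Cd / γ) * Real.sqrt C ^ (-γ) / (1 * (1 - DC)) = L := by
    have e1 : Real.sqrt C ^ (-γ) = C ^ (-(γ / 2)) := by
      rw [e3, ← Real.rpow_mul hC.le, show 1 / 2 * (-γ) = -(γ / 2) by ring]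
    rw [hLdef, hL2, hC0def, e1, e3, ← e4']
    field_simp [hγne, hDC1.ne', hdC.ne', hCd.ne',
      (Real.rpow_pos_of_pos hC ((γ + 1) / 2)).ne', (Real.rpow_pos_of_pos hC (-(γ / 2))).ne']
  -- t → √C implies ABOS
  have tC_to_ABOS : Tendsto t atTop (nhds (Real.sqrt C)) →
      Tendsto (fun m => ωGW m ^ 2 / (C * (v m / C0) ^ (2 / γ))) atTop (nhds 1) := by
    intro htC
    have ht2 : Tendsto (fun m => t m ^ 2) atTop (nhds C) := by
      have h1 := ((continuous_pow 2).tendsto (Real.sqrt C)).comp htC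
      rw [Real.sq_sqrt hC.le] at h1
      exact h1
    have hu_div : Tendsto (fun m => (1 + u m) / u m) atTop (nhds 1) := by
      have h1 := huu1.inv₀ one_ne_zero
      rw [inv_one] at h1
      exact h1.congr fun m => by rw [inv_div]
    have hWinv : Tendsto (fun m => u m / (v m / C0) ^ (2 / γ)) atTop (nhds 1) := by
      have h1 := hW.inv₀ one_ne_zero
      rw [inv_one] at h1
      exact h1.congr fun m => by rw [inv_div]
    have hcomb := ((ht2.div_const C).mul hu_div).mul hWinv
    rw [div_self hC.ne', one_mul, mul_one] at hcomb
    refine hcomb.congr fun m => ?_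
    rw [hω2 m]
    have h5 := hWpos m
    field_simp [hC.ne', (hu m).ne', (hu1 m).ne', h5.ne']
  -- forward: ABOS → δr → L
  have forward : Tendsto (fun m => ωGW m ^ 2 / (C * (v m / C0) ^ (2 / γ))) atTop (nhds 1) →
      Tendsto (fun m => δ m * (α m / (1 - α m))) atTop (nhds L) := by
    intro hABOS
    have hωu : Tendsto (fun m => ωGW m ^ 2 / (C * u m)) atTop (nhds 1) := by
      have hcomb := hABOS.mul hW
      rw [mul_one] at hcomb
      refine hcomb.congr fun m => ?_
      have h5 := hWpos m
      field_simp [hC.ne', (hu m).ne', h5.ne']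
    have ht2 : Tendsto (fun m => t m ^ 2) atTop (nhds C) := by
      have hcomb := (hωu.mul huu1).mul_const C
      rw [mul_one, one_mul] at hcomb
      refine hcomb.congr fun m => ?_
      rw [htsq m]
      field_simp [hC.ne', (hu m).ne', (hu1 m).ne']
    have htC : Tendsto t atTop (nhds (Real.sqrt C)) := by
      have h1 := (Real.continuous_sqrt.tendsto C).comp ht2
      refine h1.congr fun m => ?_
      simp only [Function.comp_apply]
      exact Real.sqrt_sq (htpos m).le
    have hBlim : Tendsto B atTop (nhds (1 - DC)) := by
      have h1 := ((GWaux.cdf_continuous h).tendsto (Real.sqrt C)).comp htC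
      have h2 := (tendsto_const_nhds (x := (1 : ℝ)) (f := atTop (α := ℕ))).sub h1
      rw [hBdef, hDCdef]
      exact h2.congr fun m => rfl
    have htpow : Tendsto (fun m => t m ^ (-γ)) atTop (nhds (Real.sqrt C ^ (-γ))) :=
      (Real.continuousAt_rpow_const _ (-γ) (Or.inl hsC.ne')).tendsto.comp htC
    have hnum : Tendsto (fun m => v m * (1 + u m) ^ (-(γ / 2)) * (ωGW m ^ γ * A m)
        * t m ^ (-γ)) atTop (nhds (C0 * (Cd / γ) * Real.sqrt C ^ (-γ))) := hG.mul htpow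
    have hden : Tendsto (fun m => (1 - p m) * (B m - A m)) atTop
        (nhds (1 * (1 - DC))) := by
      have h1 : Tendsto (fun m => 1 - p m) atTop (nhds (1 - 0)) :=
        tendsto_const_nhds.sub hp0
      rw [sub_zero] at h1
      have h2 : Tendsto (fun m => B m - A m) atTop (nhds ((1 - DC) - 0)) := hBlim.sub hA0
      rw [sub_zero] at h2
      exact h1.mul h2
    have hfinal := hnum.div hden (by positivity : (1 : ℝ) * (1 - DC) ≠ 0)
    rw [hKL] at hfinal
    refine hfinal.congr fun m => ?_
    simp only [Pi.div_apply]
    rw [← hvA m, ← hδr m]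
    have hne : (1 - p m) * (B m - A m) ≠ 0 :=
      (mul_pos (by linarith [hpm1 m]) (by linarith [hAB m])).ne'
    rw [mul_div_assoc, div_self hne, mul_one]
  -- converse: δr → L implies t → √C
  have converse : Tendsto (fun m => δ m * (α m / (1 - α m))) atTop (nhds L) →
      Tendsto t atTop (nhds (Real.sqrt C)) := by
    intro hDR
    have hden : Tendsto (fun m => δ m * (α m / (1 - α m)) * (1 - p m)) atTop
        (nhds (L * 1)) := by
      have h1 : Tendsto (fun m => 1 - p m) atTop (nhds (1 - 0)) :=
        tendsto_const_nhds.sub hp0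
      rw [sub_zero] at h1
      exact hDR.mul h1
    have hq := hG.div hden (by rw [mul_one]; exact hLpos.ne')
    have hq' : Tendsto (fun m => t m ^ γ * (B m - A m)) atTop
        (nhds (C0 * (Cd / γ) / (L * 1))) := by
      refine hq.congr fun m => ?_
      simp only [Pi.div_apply]
      have hδrm := hδr m
      rw [hvA m] at hδrm
      have hpos1 : 0 < δ m * (α m / (1 - α m)) * (1 - p m) :=
        mul_pos (mul_pos (hδ m) (hrpos m)) (by linarith [hpm1 m])
      have e2 : t m ^ γ * t m ^ (-γ) = 1 := by
        rw [← Real.rpow_add (htpos m), show γ + -γ = (0 : ℝ) by ring, Real.rpow_zero]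
      rw [div_eq_iff hpos1.ne']
      calc v m * (1 + u m) ^ (-(γ / 2)) * (ωGW m ^ γ * A m)
          = v m * (1 + u m) ^ (-(γ / 2)) * (ωGW m ^ γ * A m)
            * (t m ^ (-γ) * t m ^ γ) := by rw [mul_comm (t m ^ (-γ)), e2, mul_one]
        _ = v m * (1 + u m) ^ (-(γ / 2)) * (ωGW m ^ γ * A m) * t m ^ (-γ) * t m ^ γ := by
            ring
        _ = δ m * (α m / (1 - α m)) * ((1 - p m) * (B m - A m)) * t m ^ γ := by
            rw [← hδrm]
        _ = t m ^ γ * (B m - A m) * (δ m * (α m / (1 - α m)) * (1 - p m)) := by ring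
    have htA : Tendsto (fun m => t m ^ γ * A m) atTop (nhds 0) := by
      have hcomb := hupow0.mul hHω
      rw [zero_mul] at hcomb
      refine hcomb.congr fun m => ?_
      have e1 : (1 + u m) ^ (-(γ / 2)) * (1 + u m) ^ (γ / 2) = 1 := by
        rw [← Real.rpow_add (hu1 m), show -(γ / 2) + γ / 2 = (0 : ℝ) by ring, Real.rpow_zero]
      rw [hωt m]
      calc (1 + u m) ^ (-(γ / 2)) * (t m ^ γ * (1 + u m) ^ (γ / 2) * A m)
          = t m ^ γ * A m * ((1 + u m) ^ (-(γ / 2)) * (1 + u m) ^ (γ / 2)) := by ring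
        _ = t m ^ γ * A m := by rw [e1, mul_one]
    have hHt : Tendsto (fun m => t m ^ γ * B m) atTop
        (nhds (C0 * (Cd / γ) / (L * 1) + 0)) := by
      refine (hq'.add htA).congr fun m => by ring
    have e2C : Real.sqrt C ^ γ * Real.sqrt C ^ (-γ) = 1 := by
      rw [← Real.rpow_add hsC, show γ + -γ = (0 : ℝ) by ring, Real.rpow_zero]
    have hHval : C0 * (Cd / γ) / (L * 1) + 0 = Real.sqrt C ^ γ * (1 - DC) := by
      rw [add_zero, mul_one, ← hKL, one_mul]
      rw [div_eq_iff (div_pos (mul_pos (mul_pos hC0 (div_pos hCd hγ))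
        (Real.rpow_pos_of_pos hsC (-γ))) hDC1).ne']
      have hrearr : Real.sqrt C ^ γ * (1 - DC) * (C0 * (Cd / γ) * Real.sqrt C ^ (-γ) / (1 - DC))
          = C0 * (Cd / γ) * (Real.sqrt C ^ γ * Real.sqrt C ^ (-γ)) * ((1 - DC) / (1 - DC)) := by
        ring
      rw [hrearr, e2C, div_self hDC1.ne', mul_one, mul_one]
    rw [hHval] at hHt
    have hHt' : Tendsto (fun m => t m ^ γ * ∫ s in Set.Ioi (t m), d s) atTop
        (nhds (Real.sqrt C ^ γ * ∫ s in Set.Ioi (Real.sqrt C), d s)) := by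
      have e5 : (∫ s in Set.Ioi (Real.sqrt C), d s) = 1 - DC := by
        rw [hDCdef]
        exact (GWaux.one_sub_cdf h (Real.sqrt C)).symm
      rw [e5]
      refine hHt.congr fun m => ?_
      rw [← GWaux.one_sub_cdf h (t m), hB_eq m]
    have hHmono := GWaux.H_strictMono h
    rw [Metric.tendsto_atTop]
    intro ε hε
    set ε' : ℝ := min ε (Real.sqrt C / 2) with hε'def
    have hε'pos : 0 < ε' := lt_min hε (by linarith)
    have hε'le : ε' ≤ ε := min_le_left _ _
    have hlow0 : 0 < Real.sqrt C - ε' := by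
      have := min_le_right ε (Real.sqrt C / 2)
      have : ε' ≤ Real.sqrt C / 2 := this
      linarith
    have hmem1 : Real.sqrt C - ε' ∈ Set.Ioi (0 : ℝ) := hlow0
    have hmem2 : Real.sqrt C ∈ Set.Ioi (0 : ℝ) := hsC
    have hmem3 : Real.sqrt C + ε' ∈ Set.Ioi (0 : ℝ) := by
      simp only [Set.mem_Ioi]; linarith
    have hlow : (Real.sqrt C - ε') ^ γ * (∫ s in Set.Ioi (Real.sqrt C - ε'), d s)
        < Real.sqrt C ^ γ * ∫ s in Set.Ioi (Real.sqrt C), d s :=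
      hHmono hmem1 hmem2 (by linarith)
    have hhigh : Real.sqrt C ^ γ * (∫ s in Set.Ioi (Real.sqrt C), d s)
        < (Real.sqrt C + ε') ^ γ * ∫ s in Set.Ioi (Real.sqrt C + ε'), d s :=
      hHmono hmem2 hmem3 (by linarith)
    have hevent := hHt'.eventually_mem (Ioo_mem_nhds hlow hhigh)
    rw [eventually_atTop] at hevent
    obtain ⟨N, hN⟩ := hevent
    refine ⟨N, fun n hn => ?_⟩
    have hmemn := hN n hn
    simp only [Set.mem_Ioo] at hmemn
    have htmem : t n ∈ Set.Ioi (0 : ℝ) := htpos n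
    have hlt1 : Real.sqrt C - ε' < t n := by
      by_contra hcon
      push_neg at hcon
      have hmn := hHmono.monotoneOn htmem hmem1 hcon
      linarith [hmemn.1]
    have hlt2 : t n < Real.sqrt C + ε' := by
      by_contra hcon
      push_neg at hcon
      have hmn := hHmono.monotoneOn hmem3 htmem hcon
      linarith [hmemn.2]
    rw [Real.dist_eq, abs_lt]
    constructor <;> linarith
  refine ⟨⟨forward, fun hDR => tC_to_ABOS (converse hDR)⟩, fun hDR => ?_⟩
  -- final claim
  have hABOS := tC_to_ABOS (converse hDR)
  set CB : ℝ := ((Cd / γ) / (1 - DC)) ^ (2 / γ) with hCBdef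
  have hCBpos : 0 < CB := Real.rpow_pos_of_pos (div_pos (div_pos hCd hγ) hDC1) _
  clear_value CB
  have hLC0eq : L / C0 = (Cd / γ) / (1 - DC) * C ^ (-(γ / 2)) := by
    rw [hLdef, hL2, hC0def, e3, ← e4']
    field_simp [hγne, hDC1.ne', hdC.ne', hCd.ne',
      (Real.rpow_pos_of_pos hC ((γ + 1) / 2)).ne', (Real.rpow_pos_of_pos hC (-(γ / 2))).ne']
  have hconst : C / CB * (L / C0) ^ (2 / γ) = 1 := by
    rw [hLC0eq, Real.mul_rpow (div_pos (div_pos hCd hγ) hDC1).le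
      (Real.rpow_pos_of_pos hC _).le, ← Real.rpow_mul hC.le,
      show -(γ / 2) * (2 / γ) = -1 by field_simp, Real.rpow_neg_one, ← hCBdef]
    field_simp
  have hfrac : Tendsto (fun m => (δ m * (α m / (1 - α m)) / C0) ^ (2 / γ)) atTop
      (nhds ((L / C0) ^ (2 / γ))) :=
    (Real.continuousAt_rpow_const (L / C0) (2 / γ)
      (Or.inl (div_pos hLpos hC0).ne')).tendsto.comp (hDR.div_const C0)
  have hmain := hABOS.mul (hfrac.const_mul (C / CB))
  rw [one_mul, hconst] at hmain
  refine hmain.congr fun m => ?_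
  have e5 : δ m * (α m / (1 - α m)) / C0 * (f m / (α m / (1 - α m))) = v m / C0 := by
    rw [hv m]
    field_simp [(hα1 m).ne', hC0.ne', (hαm m).ne']
  have e6 : (δ m * (α m / (1 - α m)) / C0) ^ (2 / γ) * (f m / (α m / (1 - α m))) ^ (2 / γ)
      = (v m / C0) ^ (2 / γ) := by
    rw [← Real.mul_rpow (div_pos (mul_pos (hδ m) (hrpos m)) hC0).le
      (div_pos (hfpos m) (hrpos m)).le, e5]
  have h7 : (0 : ℝ) < (δ m * (α m / (1 - α m)) / C0) ^ (2 / γ) :=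
    Real.rpow_pos_of_pos (div_pos (mul_pos (hδ m) (hrpos m)) hC0) _
  have h8 : (0 : ℝ) < (f m / (α m / (1 - α m))) ^ (2 / γ) :=
    Real.rpow_pos_of_pos (div_pos (hfpos m) (hrpos m)) _
  have h9 := hWpos m
  rw [← e6]
  exact GWaux.final_algebra _ _ _ _ _ hC hCBpos h7 h8
end

section
/- For every γ > 0, the Student's t density with γ degrees of freedom, d(x) = C_d·(x² + γ)^(−(γ+1)/2) with C_d = γ^(γ/2)·Γ((γ+1)/2)/(√π·Γ(γ/2)), is an MPT density with tail index γ and tail constant C_d: d is even, d(x) > 0 for all x, d(x)·x^(γ+1) → C_d as x → ∞, and for every θ > 1 the map x ↦ d(x/θ)/d(x) is strictly increasing on (0, ∞). -/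
set_option maxHeartbeats 1000000


open MeasureTheory Filter

open Set

section aux

lemma real_beta {u v : ℝ} (hu : 0 < u) (hv : 0 < v) :
    ∫ x in Ioo (0:ℝ) 1, x ^ (u - 1) * (1 - x) ^ (v - 1)
      = Real.Gamma u * Real.Gamma v / Real.Gamma (u + v) := by
  have hG : Real.Gamma (u + v) ≠ 0 := (Real.Gamma_pos_of_pos (by linarith)).ne'
  have h1 : Complex.betaIntegral u v
      = ((∫ x in Ioo (0:ℝ) 1, x ^ (u - 1) * (1 - x) ^ (v - 1) : ℝ) : ℂ) := by
    rw [Complex.betaIntegral, intervalIntegral.integral_of_le zero_le_one,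
      MeasureTheory.integral_Ioc_eq_integral_Ioo]
    rw [show ((∫ x in Ioo (0:ℝ) 1, x ^ (u - 1) * (1 - x) ^ (v - 1) : ℝ) : ℂ)
        = ∫ x in Ioo (0:ℝ) 1, ((x ^ (u - 1) * (1 - x) ^ (v - 1) : ℝ) : ℂ)
      from (integral_ofReal).symm]
    refine setIntegral_congr_fun measurableSet_Ioo (fun x hx => ?_)
    have h0 : (0:ℝ) ≤ x := hx.1.le
    have h1 : (0:ℝ) ≤ 1 - x := by linarith [hx.2]
    rw [Complex.ofReal_mul, Complex.ofReal_cpow h0, Complex.ofReal_cpow h1]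
    push_cast
    ring_nf
  have h2 := Complex.Gamma_mul_Gamma_eq_betaIntegral
    (s := (u:ℂ)) (t := (v:ℂ)) (by simpa using hu) (by simpa using hv)
  rw [h1, ← Complex.ofReal_add, Complex.Gamma_ofReal, Complex.Gamma_ofReal,
    Complex.Gamma_ofReal, ← Complex.ofReal_mul, ← Complex.ofReal_mul] at h2
  have h3 : Real.Gamma u * Real.Gamma v
      = Real.Gamma (u + v) * ∫ x in Ioo (0:ℝ) 1, x ^ (u - 1) * (1 - x) ^ (v - 1) :=
    Complex.ofReal_inj.mp h2
  rw [h3]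
  field_simp

lemma beta_Ioi {u v : ℝ} (hu : 0 < u) (hv : 0 < v) :
    ∫ t in Ioi (0:ℝ), t ^ (u - 1) * (1 + t) ^ (-(u + v))
      = Real.Gamma u * Real.Gamma v / Real.Gamma (u + v) := by
  have himg : (fun x : ℝ => x / (1 - x)) '' Ioo 0 1 = Ioi 0 := by
    ext y
    constructor
    · rintro ⟨x, hx, rfl⟩
      exact div_pos hx.1 (by linarith [hx.2])
    · intro hy
      refine ⟨y / (1 + y), ⟨div_pos hy (by linarith [mem_Ioi.mp hy]), ?_⟩, ?_⟩
      · rw [div_lt_one (by linarith [mem_Ioi.mp hy])]; linarith [mem_Ioi.mp hy]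
      · have h1y : (1:ℝ) + y ≠ 0 := by have := mem_Ioi.mp hy; positivity
        field_simp
        ring
  have hderiv : ∀ x ∈ Ioo (0:ℝ) 1, HasDerivWithinAt (fun x : ℝ => x / (1 - x))
      (((1 - x) ^ 2)⁻¹) (Ioo 0 1) x := by
    intro x hx
    have hne : (1:ℝ) - x ≠ 0 := by have := hx.2; intro h; linarith [h]
    have := (hasDerivAt_id x).div ((hasDerivAt_const x 1).sub (hasDerivAt_id x)) hne
    refine HasDerivWithinAt.congr_deriv this.hasDerivWithinAt ?_
    simp only [Pi.sub_apply, id]; rw [inv_eq_one_div]; congr 1; ring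
  have hinj : InjOn (fun x : ℝ => x / (1 - x)) (Ioo 0 1) := by
    intro a ha b hb hab
    have hna : (1:ℝ) - a ≠ 0 := by have := ha.2; intro h; linarith [h]
    have hnb : (1:ℝ) - b ≠ 0 := by have := hb.2; intro h; linarith [h]
    field_simp at hab
    linarith [hab]
  have := integral_image_eq_integral_abs_deriv_smul measurableSet_Ioo hderiv hinj
    (fun t => t ^ (u - 1) * (1 + t) ^ (-(u + v)))
  rw [himg] at this
  rw [this, ← real_beta hu hv]
  refine setIntegral_congr_fun measurableSet_Ioo (fun x hx => ?_)
  have hx0 : (0:ℝ) < x := hx.1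
  have hx1 : (0:ℝ) < 1 - x := by linarith [hx.2]
  have key : (1:ℝ) + x / (1 - x) = (1 - x)⁻¹ := by field_simp; ring
  have e1 : (((1-x):ℝ) ^ 2)⁻¹ = (1-x) ^ (-2:ℝ) := by
    rw [← Real.rpow_natCast (1-x) 2, ← Real.rpow_neg hx1.le]; norm_num
  have e2 : (((1-x):ℝ)⁻¹) ^ (-(u+v)) = (1-x) ^ (u+v) := by
    rw [← Real.rpow_neg_one (1-x), ← Real.rpow_mul hx1.le]; norm_num
  have e3 : (x/(1-x)) ^ (u-1) = x ^ (u-1) * (1-x) ^ (-(u-1)) := by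
    rw [Real.div_rpow hx0.le hx1.le, Real.rpow_neg hx1.le, div_eq_mul_inv]
  calc |(((1-x):ℝ) ^ 2)⁻¹| • ((x / (1 - x)) ^ (u - 1) * (1 + x / (1 - x)) ^ (-(u + v)))
      = (1-x) ^ (-2:ℝ) * (x ^ (u-1) * (1-x) ^ (-(u-1)) * (1-x) ^ (u+v)) := by
        rw [smul_eq_mul, key, abs_of_pos (by positivity), e1, e2, e3]
    _ = x ^ (u-1) * ((1-x) ^ (-2:ℝ) * (1-x) ^ (-(u-1)) * (1-x) ^ (u+v)) := by ring
    _ = x ^ (u-1) * (1-x) ^ (v-1) := by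
        rw [← Real.rpow_add hx1, ← Real.rpow_add hx1]
        congr 1
        ring

lemma J_eval {s : ℝ} (hs : 1/2 < s) :
    ∫ x in Ioi (0:ℝ), (1 + x ^ 2) ^ (-s)
      = (1/2) * (Real.Gamma (1/2) * Real.Gamma (s - 1/2) / Real.Gamma s) := by
  have h2 : (2:ℝ) ≠ 0 := two_ne_zero
  have key := integral_comp_rpow_Ioi
    (fun t => (1/2) * (t ^ ((1:ℝ)/2 - 1) * (1 + t) ^ (-((1:ℝ)/2 + (s - 1/2))))) h2
  have hL : ∫ x in Ioi (0:ℝ), (1 + x ^ 2) ^ (-s)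
      = ∫ x in Ioi (0:ℝ), (|(2:ℝ)| * x ^ ((2:ℝ) - 1)) •
          (fun t => (1/2) * (t ^ ((1:ℝ)/2 - 1) * (1 + t) ^ (-((1:ℝ)/2 + (s - 1/2))))) (x ^ (2:ℝ)) := by
    refine setIntegral_congr_fun measurableSet_Ioi (fun x hx => ?_)
    have hx0 : (0:ℝ) < x := hx
    have hsq : x ^ (2:ℝ) = x ^ 2 := by
      rw [← Real.rpow_natCast x 2]; norm_num
    have hpow : (x ^ 2 : ℝ) ^ ((1:ℝ)/2 - 1) = x ^ (-1:ℝ) := by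
      rw [← Real.rpow_natCast x 2, ← Real.rpow_mul hx0.le]; norm_num
    dsimp only
    rw [smul_eq_mul, hsq, hpow]
    have h21 : ((2:ℝ) - 1) = 1 := by norm_num
    rw [h21, Real.rpow_one, Real.rpow_neg_one]
    have hexp : -((1:ℝ)/2 + (s - 1/2)) = -s := by ring
    rw [hexp]
    field_simp
    norm_num
  rw [hL, key, integral_const_mul]
  rw [beta_Ioi (by norm_num) (by linarith)]
  have : (1:ℝ)/2 + (s - 1/2) = s := by ring
  rw [this]

lemma K_eval {γ : ℝ} (hγ : 0 < γ) :
    ∫ x in Ioi (0:ℝ), (x ^ 2 + γ) ^ (-((γ+1)/2))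
      = Real.sqrt γ * γ ^ (-((γ+1)/2)) *
        ((1/2) * (Real.Gamma (1/2) * Real.Gamma (γ/2) / Real.Gamma ((γ+1)/2))) := by
  set s : ℝ := (γ+1)/2 with hsdef
  have hs : 1/2 < s := by rw [hsdef]; linarith
  have hsqrt : (0:ℝ) < Real.sqrt γ := Real.sqrt_pos.mpr hγ
  have key := integral_comp_mul_left_Ioi (fun x => (x ^ 2 + γ) ^ (-s)) 0 hsqrt
  rw [mul_zero] at key
  have hL : ∫ x in Ioi (0:ℝ), (fun x => (x ^ 2 + γ) ^ (-s)) (Real.sqrt γ * x)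
      = ∫ x in Ioi (0:ℝ), γ ^ (-s) * (1 + x ^ 2) ^ (-s) := by
    refine setIntegral_congr_fun measurableSet_Ioi (fun x hx => ?_)
    simp only
    have : (Real.sqrt γ * x) ^ 2 + γ = γ * (1 + x ^ 2) := by
      rw [mul_pow, Real.sq_sqrt hγ.le]; ring
    rw [this, Real.mul_rpow hγ.le (by positivity)]
  rw [hL, integral_const_mul] at key
  rw [smul_eq_mul] at key
  have h2 : ∫ x in Ioi (0:ℝ), (x ^ 2 + γ) ^ (-s)
      = Real.sqrt γ * (γ ^ (-s) * ∫ x in Ioi (0:ℝ), (1 + x ^ 2) ^ (-s)) := by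
    rw [key, ← mul_assoc, mul_inv_cancel₀ hsqrt.ne', one_mul]
  rw [h2, J_eval hs, hsdef]
  have : (γ+1)/2 - 1/2 = γ/2 := by ring
  rw [this]
  ring

lemma integrable_of_even_Ioi {f : ℝ → ℝ} (hf : ∀ x, f (-x) = f x)
    (h : IntegrableOn f (Ioi 0)) : Integrable f := by
  have hIic : IntegrableOn f (Iic 0) := by
    rw [← Measure.map_neg_eq_self (volume : Measure ℝ)]
    have m : MeasurableEmbedding fun x : ℝ => -x := (Homeomorph.neg ℝ).measurableEmbedding
    rw [m.integrableOn_map_iff]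
    have : (f ∘ fun x : ℝ => -x) = f := funext fun x => hf x
    rw [this]
    simp only [neg_preimage, neg_Iic, neg_zero]
    exact (integrableOn_Ici_iff_integrableOn_Ioi enorm_ne_top).mpr h
  rw [← integrableOn_univ, ← Iic_union_Ioi (a := (0:ℝ))]
  exact hIic.union h

lemma integrable_studentT_kernel {γ : ℝ} (hγ : 0 < γ) :
    Integrable (fun x : ℝ => (x ^ 2 + γ) ^ (-((γ+1)/2))) := by
  set s : ℝ := (γ+1)/2 with hsdef
  have hcont : Continuous (fun x : ℝ => (x ^ 2 + γ) ^ (-s)) := by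
    refine Continuous.rpow_const (by fun_prop) (fun x => Or.inl (by positivity))
  refine integrable_of_even_Ioi (fun x => by simp) ?_
  have hIoc : IntegrableOn (fun x : ℝ => (x ^ 2 + γ) ^ (-s)) (Ioc 0 1) :=
    hcont.integrableOn_Ioc
  have hIoi : IntegrableOn (fun x : ℝ => (x ^ 2 + γ) ^ (-s)) (Ioi 1) := by
    have hbase : IntegrableOn (fun x : ℝ => x ^ (-(γ+1))) (Ioi 1) :=
      integrableOn_Ioi_rpow_of_lt (by linarith) one_pos
    refine hbase.integrable.mono' hcont.aestronglyMeasurable.restrict ?_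
    refine (ae_restrict_iff' measurableSet_Ioi).mpr (Eventually.of_forall fun x hx => ?_)
    have hx1 : (1:ℝ) < x := hx
    have hx0 : (0:ℝ) < x := by linarith
    rw [Real.norm_eq_abs, abs_of_nonneg (Real.rpow_nonneg (by positivity) _)]
    have h1 : (x ^ 2 + γ) ^ (-s) ≤ (x ^ 2 : ℝ) ^ (-s) :=
      Real.rpow_le_rpow_of_nonpos (by positivity) (by linarith) (by rw [hsdef]; linarith)
    have h2 : ((x:ℝ) ^ 2) ^ (-s) = x ^ (-(γ+1)) := by
      rw [← Real.rpow_natCast x 2, ← Real.rpow_mul hx0.le]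
      congr 1
      rw [hsdef]; push_cast; ring
    rw [h2] at h1
    exact h1
  have : Ioc (0:ℝ) 1 ∪ Ioi 1 = Ioi 0 := Ioc_union_Ioi_eq_Ioi zero_le_one
  rw [← this]
  exact hIoc.union hIoi

end aux


/-- For every `γ > 0`, the Student's t density with `γ` degrees of freedom,
`d x = Cd * (x ^ 2 + γ) ^ (-(γ + 1) / 2)` with
`Cd = γ ^ (γ/2) * Γ((γ+1)/2) / (√π * Γ(γ/2))`, is an MPT density with tail index `γ` and
tail constant `Cd`; moreover `d` is even and strictly positive everywhere. -/
theorem studentT_isMPT (γ : ℝ) (hγ : 0 < γ)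
    (Cd : ℝ)
    (hCd : Cd = γ ^ (γ / 2) * Real.Gamma ((γ + 1) / 2)
      / (Real.sqrt Real.pi * Real.Gamma (γ / 2)))
    (d : ℝ → ℝ) (hd : ∀ x, d x = Cd * (x ^ 2 + γ) ^ (-((γ + 1) / 2))) :
    IsMPT d γ Cd ∧ (∀ x, d (-x) = d x) ∧ (∀ x, 0 < d x) := by
  set s : ℝ := (γ + 1) / 2 with hsdef
  have hs0 : 0 < s := by rw [hsdef]; linarith
  have hCd_pos : 0 < Cd := by
    rw [hCd]
    have h1 := Real.Gamma_pos_of_pos (show (0:ℝ) < (γ+1)/2 by linarith)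
    have h2 := Real.Gamma_pos_of_pos (show (0:ℝ) < γ/2 by linarith)
    have h3 : (0:ℝ) < Real.sqrt Real.pi := Real.sqrt_pos.mpr Real.pi_pos
    have h4 : (0:ℝ) < γ ^ (γ/2) := Real.rpow_pos_of_pos hγ _
    positivity
  have hdpos : ∀ x : ℝ, 0 < d x := by
    intro x
    rw [hd x]
    have : (0:ℝ) < (x ^ 2 + γ) ^ (-((γ+1)/2)) := Real.rpow_pos_of_pos (by positivity) _
    positivity
  have heven : ∀ x, d (-x) = d x := by
    intro x; simp only [hd, neg_sq]
  have hdfun : d = fun x => Cd * (x ^ 2 + γ) ^ (-s) := funext hd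
  have hint : Integrable d := by
    rw [hdfun]
    exact (integrable_studentT_kernel hγ).const_mul Cd
  refine ⟨⟨hγ, hCd_pos, fun x => (hdpos x).le, hint, ?_, Or.inl heven, fun x _ => hdpos x, ?_, ?_⟩,
    heven, hdpos⟩
  · -- integral_one
    have habs : (fun x : ℝ => d |x|) = d := by
      funext x
      rcases abs_cases x with ⟨h, _⟩ | ⟨h, _⟩
      · rw [h]
      · rw [h, heven]
    have h2K : ∫ x, d x = 2 * ∫ x in Ioi (0:ℝ), d x := by
      rw [← integral_comp_abs (f := d), habs]
    rw [h2K, hdfun]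
    rw [integral_const_mul]
    simp only [hsdef]
    rw [K_eval hγ, hCd, Real.Gamma_one_half_eq]
    have hsqrtγ : Real.sqrt γ = γ ^ ((1:ℝ)/2) := Real.sqrt_eq_rpow γ
    have hπ : Real.sqrt Real.pi ≠ 0 := (Real.sqrt_pos.mpr Real.pi_pos).ne'
    have hg1 : Real.Gamma ((γ+1)/2) ≠ 0 := (Real.Gamma_pos_of_pos (by linarith)).ne'
    have hg2 : Real.Gamma (γ/2) ≠ 0 := (Real.Gamma_pos_of_pos (by linarith)).ne'
    have hrpow : γ ^ (γ/2) * (γ ^ ((1:ℝ)/2) * γ ^ (-((γ+1)/2))) = 1 := by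
      rw [← Real.rpow_add hγ, ← Real.rpow_add hγ]
      rw [show γ/2 + (1/2 + -((γ+1)/2)) = 0 by ring, Real.rpow_zero]
    rw [hsqrtγ]
    rw [show 2 * (γ ^ (γ/2) * Real.Gamma ((γ+1)/2) / (Real.sqrt Real.pi * Real.Gamma (γ/2))
          * (γ ^ ((1:ℝ)/2) * γ ^ (-((γ+1)/2)) *
            (1/2 * (Real.sqrt Real.pi * Real.Gamma (γ/2) / Real.Gamma ((γ+1)/2)))))
        = γ ^ (γ/2) * (γ ^ ((1:ℝ)/2) * γ ^ (-((γ+1)/2))) *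
          (Real.Gamma ((γ+1)/2) * (Real.sqrt Real.pi * Real.Gamma (γ/2))
            / (Real.sqrt Real.pi * Real.Gamma (γ/2) * Real.Gamma ((γ+1)/2))) from by ring]
    rw [hrpow, one_mul,
      show Real.Gamma ((γ+1)/2) * (Real.sqrt Real.pi * Real.Gamma (γ/2))
        = Real.sqrt Real.pi * Real.Gamma (γ/2) * Real.Gamma ((γ+1)/2) from by ring,
      div_self (by positivity)]
  · -- tail
    have hratio : Tendsto (fun x : ℝ => x ^ 2 / (x ^ 2 + γ)) atTop (nhds 1) := by
      have htop : Tendsto (fun x : ℝ => x ^ 2 + γ) atTop atTop :=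
        (tendsto_pow_atTop two_ne_zero).atTop_add tendsto_const_nhds
      have h0 : Tendsto (fun x : ℝ => γ / (x ^ 2 + γ)) atTop (nhds 0) :=
        Tendsto.div_atTop tendsto_const_nhds htop
      have heq : (fun x : ℝ => x ^ 2 / (x ^ 2 + γ)) = fun x => 1 - γ / (x ^ 2 + γ) := by
        funext x
        have hne : x ^ 2 + γ ≠ 0 := by positivity
        field_simp
        ring
      rw [heq]
      simpa using tendsto_const_nhds.sub h0
    have hcont : ContinuousAt (fun u : ℝ => u ^ s) 1 :=
      (Real.continuousAt_rpow_const 1 s (Or.inl one_ne_zero))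
    have hpowlim : Tendsto (fun x : ℝ => (x ^ 2 / (x ^ 2 + γ)) ^ s) atTop (nhds 1) := by
      have := hcont.tendsto.comp hratio
      simpa [Real.one_rpow, Function.comp_def] using this
    have hlim : Tendsto (fun x : ℝ => Cd * (x ^ 2 / (x ^ 2 + γ)) ^ s) atTop (nhds Cd) := by
      simpa using tendsto_const_nhds.mul hpowlim
    refine hlim.congr' ?_
    filter_upwards [eventually_gt_atTop (0:ℝ)] with x hx
    rw [hd x]
    have hbase : (0:ℝ) < x ^ 2 + γ := by positivity
    have h1 : x ^ (γ + 1) = ((x:ℝ) ^ 2) ^ s := by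
      rw [← Real.rpow_natCast x 2, ← Real.rpow_mul hx.le]
      congr 1
      rw [hsdef]; push_cast; ring
    rw [h1, mul_assoc]
    congr 1
    rw [Real.div_rpow (by positivity) hbase.le, Real.rpow_neg hbase.le, mul_comm,
      div_eq_mul_inv]
  · -- mlr
    intro θ hθ x hx y hy hxy
    have hx0 : (0:ℝ) < x := hx
    have hy0 : (0:ℝ) < y := hy
    have hθ0 : (0:ℝ) < θ := by linarith
    simp only
    rw [div_lt_div_iff₀ (hdpos x) (hdpos y)]
    rw [hd, hd, hd, hd]
    have hsq : ∀ z : ℝ, (z / θ) ^ 2 = z ^ 2 * (θ ^ 2)⁻¹ := by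
      intro z; rw [div_pow]; ring
    set c : ℝ := (θ ^ 2)⁻¹ with hcdef
    have hc0 : 0 < c := by positivity
    have hc1 : c < 1 := by
      rw [hcdef, inv_lt_one_iff₀]
      right; nlinarith
    rw [hsq, hsq]
    have e : ∀ a b : ℝ, 0 < a → 0 < b →
        Cd * a ^ (-s) * (Cd * b ^ (-s)) = Cd ^ 2 * (a * b) ^ (-s) := by
      intro a b ha hb
      rw [Real.mul_rpow ha.le hb.le]; ring
    rw [e _ _ (by positivity) (by positivity), e _ _ (by positivity) (by positivity)]
    have hBA : (y ^ 2 * c + γ) * (x ^ 2 + γ) < (x ^ 2 * c + γ) * (y ^ 2 + γ) := by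
      have hx2y2 : x ^ 2 < y ^ 2 := by nlinarith
      nlinarith [mul_pos (mul_pos hγ (sub_pos.mpr hx2y2)) (sub_pos.mpr hc1)]
    exact mul_lt_mul_of_pos_left
      (Real.rpow_lt_rpow_of_neg (by positivity) hBA (by linarith)) (by positivity)
end
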